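/- arXiv:math/0405368 — 3 statements merged into one kernel-verified Lean document; each statement's English description precedes it below -/
import Mathlib

section
/- For every z ∈ ℂ, lim_{n→∞} ₂F₁(n+2k, −n, k+1/2; (1−cos(z/n))/2) = j_{k−1/2}(z), where j_α(z) = Γ(α+1) Σ_{m≥0} (−1)^m (z/2)^{2m} / (m! Γ(m+α+1)) is the modified Bessel function, and k > 0. -/
open Filter Finset Topology

private lemma poch_eval_prod {R : Type*} [CommSemiring R] (m : ℕ) (x : R) :
    (ascPochhammer R m).eval x = ∏ i ∈ range m, (x + i) := by
  induction m with
  | zero => simp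
  | succ m ih => rw [ascPochhammer_succ_eval, ih, prod_range_succ]

private lemma ccos_bound {x : ℂ} (hx : ‖x‖ ≤ 1) :
    ‖Complex.cos x - (1 - x ^ 2 / 2)‖ ≤ ‖x‖ ^ 4 * (5 / 96) := by
  have h1 : Complex.cos x - (1 - x ^ 2 / 2) =
      ((Complex.exp (x * Complex.I) - ∑ m ∈ Finset.range 4, (x * Complex.I) ^ m / m.factorial) +
        (Complex.exp (-x * Complex.I) -
          ∑ m ∈ Finset.range 4, (-x * Complex.I) ^ m / m.factorial)) / 2 := by
    rw [Complex.cos]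
    simp only [Finset.sum_range_succ, Finset.range_zero, Finset.sum_empty, pow_zero, pow_one,
      Nat.factorial]
    push_cast
    linear_combination (x ^ 2 / 2) * Complex.I_sq
  rw [h1]
  calc ‖((Complex.exp (x * Complex.I) -
          ∑ m ∈ Finset.range 4, (x * Complex.I) ^ m / m.factorial) +
        (Complex.exp (-x * Complex.I) -
          ∑ m ∈ Finset.range 4, (-x * Complex.I) ^ m / m.factorial)) / 2‖
      ≤ (‖Complex.exp (x * Complex.I) -
          ∑ m ∈ Finset.range 4, (x * Complex.I) ^ m / m.factorial‖
        + ‖Complex.exp (-x * Complex.I) -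
          ∑ m ∈ Finset.range 4, (-x * Complex.I) ^ m / m.factorial‖) / 2 := by
        rw [norm_div, Complex.norm_two]
        gcongr
        exact norm_add_le _ _
    _ ≤ (‖x * Complex.I‖ ^ 4 * (Nat.succ 4 * ((Nat.factorial 4) * (4 : ℕ) : ℝ)⁻¹)
        + ‖-x * Complex.I‖ ^ 4 *
            (Nat.succ 4 * ((Nat.factorial 4) * (4 : ℕ) : ℝ)⁻¹)) / 2 := by
        gcongr
        · exact Complex.exp_bound (by simpa) (by decide)
        · exact Complex.exp_bound (by simpa) (by decide)
    _ ≤ ‖x‖ ^ 4 * (5 / 96) := by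
        simp only [norm_mul, norm_neg, Complex.norm_I, mul_one]
        norm_num [Nat.factorial]

private lemma xterm_bound {w : ℂ} (hw : ‖w‖ ≤ 1) : ‖(1 - Complex.cos w) / 2‖ ≤ ‖w‖ ^ 2 := by
  have h := ccos_bound (x := w) hw
  have h2 : (1 - Complex.cos w) / 2 = (w ^ 2 / 2 - (Complex.cos w - (1 - w ^ 2 / 2))) / 2 := by
    ring
  rw [h2, norm_div]
  have h3 : ‖w ^ 2 / 2 - (Complex.cos w - (1 - w ^ 2 / 2))‖
      ≤ ‖w‖ ^ 2 / 2 + ‖w‖ ^ 4 * (5 / 96) := by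
    refine (norm_sub_le _ _).trans ?_
    gcongr
    rw [norm_div]
    simp [norm_pow]
  have h5 : ‖w‖ ^ 2 ≤ 1 := by nlinarith [norm_nonneg w]
  have h4 : ‖w‖ ^ 4 ≤ ‖w‖ ^ 2 := by
    nlinarith [mul_nonneg (sub_nonneg.mpr h5) (sq_nonneg (‖w‖))]
  have : ‖(2 : ℂ)‖ = 2 := by norm_num
  rw [this]
  nlinarith [norm_nonneg w]

private lemma gamma_poch (k : ℝ) (hk : 0 < k) (m : ℕ) :
    Complex.Gamma ((m : ℂ) + (k : ℂ) + 1 / 2) =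
      (ascPochhammer ℂ m).eval ((k : ℂ) + 1 / 2) * Complex.Gamma ((k : ℂ) + 1 / 2) := by
  induction m with
  | zero => simp
  | succ m ih =>
    have h0 : ((m : ℂ) + k + 1 / 2) ≠ 0 := by
      intro h
      have := congrArg Complex.re h
      simp [Complex.add_re, Complex.ofReal_re, Complex.div_re] at this
      nlinarith [this]
    have h1 : ((m + 1 : ℕ) : ℂ) + k + 1 / 2 = ((m : ℂ) + k + 1 / 2) + 1 := by push_cast; ring
    rw [h1, Complex.Gamma_add_one _ h0, ih, ascPochhammer_succ_eval]
    ring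

private lemma poch_complex_real (k : ℝ) (m : ℕ) :
    (ascPochhammer ℂ m).eval ((k : ℂ) + 1 / 2) =
      (((ascPochhammer ℝ m).eval (k + 1 / 2) : ℝ) : ℂ) := by
  rw [poch_eval_prod, poch_eval_prod]
  push_cast
  rfl

set_option maxHeartbeats 1000000 in
/-- Mehler–Heine type limit: for `k > 0` and `z ∈ ℂ`, the renormalized Gegenbauer
polynomials `Q_n^k(cos(z/n)) = ₂F₁(n+2k, −n, k+1/2; (1−cos(z/n))/2)` (a terminating
hypergeometric sum) converge to the modified Bessel function
`j_{k−1/2}(z) = Γ(k+1/2) Σ_m (−1)^m (z/2)^{2m} / (m! Γ(m+k+1/2))`. -/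
theorem gegenbauer_tendsto_bessel (k : ℝ) (hk : 0 < k) (z : ℂ) :
    Tendsto
      (fun n : ℕ =>
        ∑ m ∈ Finset.range (n + 1),
          (ascPochhammer ℂ m).eval ((n : ℂ) + 2 * k) * (ascPochhammer ℂ m).eval (-(n : ℂ)) /
            ((ascPochhammer ℂ m).eval ((k : ℂ) + 1 / 2) * (m.factorial : ℂ)) *
            ((1 - Complex.cos (z / n)) / 2) ^ m)
      atTop
      (nhds (Complex.Gamma ((k : ℂ) + 1 / 2) *
        ∑' m : ℕ, (-1) ^ m * (z / 2) ^ (2 * m) /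
          ((m.factorial : ℂ) * Complex.Gamma ((m : ℂ) + (k : ℂ) + 1 / 2)))) := by
  set x : ℕ → ℂ := fun n => (1 - Complex.cos (z / n)) / 2 with hx
  set f : ℕ → ℕ → ℂ := fun n m =>
    (ascPochhammer ℂ m).eval ((n : ℂ) + 2 * k) * (ascPochhammer ℂ m).eval (-(n : ℂ)) /
      ((ascPochhammer ℂ m).eval ((k : ℂ) + 1 / 2) * (m.factorial : ℂ)) * (x n) ^ m with hf
  set g : ℕ → ℂ := fun m =>
    (-1) ^ m * (z ^ 2 / 4) ^ m /
      ((ascPochhammer ℂ m).eval ((k : ℂ) + 1 / 2) * (m.factorial : ℂ)) with hg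
  -- basic positivity facts
  have hkh : (0 : ℝ) < k + 1 / 2 := by linarith
  have hPr_pos : ∀ m : ℕ, 0 < (ascPochhammer ℝ m).eval (k + 1 / 2) :=
    fun m => ascPochhammer_pos m _ hkh
  have hP_ne : ∀ m : ℕ, (ascPochhammer ℂ m).eval ((k : ℂ) + 1 / 2) ≠ 0 := by
    intro m
    rw [poch_complex_real]
    exact_mod_cast (hPr_pos m).ne'
  have hP_norm : ∀ m : ℕ, ‖(ascPochhammer ℂ m).eval ((k : ℂ) + 1 / 2)‖
      = (ascPochhammer ℝ m).eval (k + 1 / 2) := by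
    intro m
    rw [poch_complex_real, Complex.norm_real, Real.norm_eq_abs, abs_of_pos (hPr_pos m)]
  -- the RHS equals ∑' g
  have hRHS : (Complex.Gamma ((k : ℂ) + 1 / 2) *
      ∑' m : ℕ, (-1) ^ m * (z / 2) ^ (2 * m) /
        ((m.factorial : ℂ) * Complex.Gamma ((m : ℂ) + (k : ℂ) + 1 / 2))) = ∑' m, g m := by
    rw [← tsum_mul_left]
    refine tsum_congr fun m => ?_
    have hG : Complex.Gamma ((k : ℂ) + 1 / 2) ≠ 0 := by
      apply Complex.Gamma_ne_zero_of_re_pos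
      simp only [Complex.add_re, Complex.ofReal_re, Complex.div_re, Complex.one_re]
      norm_num
      linarith
    have hfm : ((m.factorial : ℂ)) ≠ 0 := Nat.cast_ne_zero.mpr m.factorial_ne_zero
    rw [gamma_poch k hk m, hg]
    have h1 : (z / 2) ^ (2 * m) = (z ^ 2 / 4) ^ m := by
      rw [pow_mul]
      ring_nf
    rw [h1, ← mul_div_assoc,
      div_eq_div_iff (mul_ne_zero hfm (mul_ne_zero (hP_ne m) hG)) (mul_ne_zero (hP_ne m) hfm)]
    ring
  -- vanishing of terms beyond n
  have hzero : ∀ n m : ℕ, n < m → f n m = 0 := by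
    intro n m hnm
    have : (ascPochhammer ℂ m).eval (-(n : ℂ)) = 0 := by
      rw [poch_eval_prod]
      exact Finset.prod_eq_zero (Finset.mem_range.mpr hnm) (by ring)
    simp [hf, this]
  -- inverse tendsto
  have hinv : Tendsto (fun n : ℕ => ((n : ℂ))⁻¹) atTop (𝓝 0) := by
    apply squeeze_zero_norm (a := fun n : ℕ => ((n : ℝ))⁻¹)
    · intro n
      simp [Complex.norm_natCast]
    · exact tendsto_inv_atTop_zero.comp tendsto_natCast_atTop_atTop
  -- key limit : n^2 * x n → z^2/4
  have hT : Tendsto (fun n : ℕ => (n : ℂ) ^ 2 * x n) atTop (𝓝 (z ^ 2 / 4)) := by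
    rw [← tendsto_sub_nhds_zero_iff]
    apply squeeze_zero_norm' (a := fun n : ℕ => ‖z‖ ^ 4 * (5 / 192) / (n : ℝ) ^ 2)
    · filter_upwards [eventually_ge_atTop (max 1 ⌈‖z‖⌉₊)] with n hn
      have hn1 : (1 : ℕ) ≤ n := le_trans (le_max_left _ _) hn
      have hnR : (0 : ℝ) < n := by exact_mod_cast hn1
      have hz_le : ‖z‖ ≤ (n : ℝ) := by
        calc ‖z‖ ≤ (⌈‖z‖⌉₊ : ℝ) := Nat.le_ceil _
          _ ≤ n := by exact_mod_cast le_trans (le_max_right _ _) hn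
      have hn0 : ((n : ℂ)) ≠ 0 := Nat.cast_ne_zero.mpr (by omega)
      have hw : ‖z / (n : ℂ)‖ ≤ 1 := by
        rw [norm_div, Complex.norm_natCast, div_le_one hnR]
        exact hz_le
      have hident : (n : ℂ) ^ 2 * x n - z ^ 2 / 4
          = -((n : ℂ) ^ 2 / 2) * (Complex.cos (z / n) - (1 - (z / n) ^ 2 / 2)) := by
        simp only [hx]
        field_simp
        ring
      have hb := ccos_bound (x := z / n) hw
      have hnorm1 : ‖-((n : ℂ) ^ 2 / 2)‖ = (n : ℝ) ^ 2 / 2 := by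
        rw [norm_neg, norm_div, norm_pow, Complex.norm_natCast]
        norm_num
      have hq : ‖z / (n : ℂ)‖ ^ 4 = ‖z‖ ^ 4 / (n : ℝ) ^ 4 := by
        rw [norm_div, Complex.norm_natCast, div_pow]
      rw [hident, norm_mul, hnorm1]
      calc (n : ℝ) ^ 2 / 2 * ‖Complex.cos (z / n) - (1 - (z / n) ^ 2 / 2)‖
          ≤ (n : ℝ) ^ 2 / 2 * (‖z‖ ^ 4 / (n : ℝ) ^ 4 * (5 / 96)) := by
            rw [← hq]
            gcongr
        _ = ‖z‖ ^ 4 * (5 / 192) / (n : ℝ) ^ 2 := by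
            field_simp
            ring
    · exact Tendsto.div_atTop tendsto_const_nhds
        ((tendsto_pow_atTop two_ne_zero).comp tendsto_natCast_atTop_atTop)
  -- pointwise limits
  have hlim : ∀ m : ℕ, Tendsto (fun n => f n m) atTop (𝓝 (g m)) := by
    intro m
    have hfac : ∀ i : ℕ, Tendsto
        (fun n : ℕ => (1 + (2 * (k : ℂ) + i) * ((n : ℂ))⁻¹) * ((i : ℂ) * ((n : ℂ))⁻¹ - 1))
        atTop (𝓝 ((1 + (2 * (k : ℂ) + i) * 0) * ((i : ℂ) * 0 - 1))) :=
      fun i => ((hinv.const_mul _).const_add 1).mul ((hinv.const_mul _).sub_const 1)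
    have hprod := tendsto_finset_prod (range m) (fun i (_ : i ∈ range m) => hfac i)
    have hF := (hprod.mul (hT.pow m)).div_const
      ((ascPochhammer ℂ m).eval ((k : ℂ) + 1 / 2) * (m.factorial : ℂ))
    have hval : (∏ i ∈ range m, ((1 + (2 * (k : ℂ) + i) * 0) * ((i : ℂ) * 0 - 1))) * (z ^ 2 / 4) ^ m /
        ((ascPochhammer ℂ m).eval ((k : ℂ) + 1 / 2) * (m.factorial : ℂ)) = g m := by
      simp [hg, prod_const]
    rw [hval] at hF
    apply hF.congr'
    filter_upwards [eventually_ge_atTop 1] with n hn1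
    have hn0 : ((n : ℂ)) ≠ 0 := Nat.cast_ne_zero.mpr (by omega)
    simp only [hf]
    rw [poch_eval_prod m ((n : ℂ) + 2 * (k : ℂ)), poch_eval_prod m (-(n : ℂ))]
    have hpow : ((n : ℂ) ^ 2 * x n) ^ m = ∏ _i ∈ range m, ((n : ℂ) ^ 2 * x n) := by
      rw [prod_const, card_range]
    rw [hpow, ← prod_mul_distrib]
    have hterm : ∀ i ∈ range m,
        (1 + (2 * (k : ℂ) + i) * ((n : ℂ))⁻¹) * ((i : ℂ) * ((n : ℂ))⁻¹ - 1) * ((n : ℂ) ^ 2 * x n)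
          = (((n : ℂ) + 2 * k + i) * (-(n : ℂ) + i)) * x n := by
      intro i _
      field_simp
      ring
    rw [prod_congr rfl hterm]
    have : ∀ i ∈ range m, (((n : ℂ) + 2 * k + i) * (-(n : ℂ) + i)) * x n
        = ((n : ℂ) + 2 * k + i) * ((-(n : ℂ) + i) * x n) := fun i _ => by ring
    rw [prod_congr rfl this, prod_mul_distrib, prod_mul_distrib, prod_const, card_range]
    ring
  -- uniform bound
  have hA0 : (0 : ℝ) ≤ (2 + 2 * k) * 2 * ‖z‖ ^ 2 := by
    have : (0 : ℝ) ≤ 2 + 2 * k := by linarith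
    positivity
  have hbound : ∀ᶠ n in atTop, ∀ m : ℕ,
      ‖f n m‖ ≤ ((2 + 2 * k) * 2 * ‖z‖ ^ 2) ^ m / m.factorial := by
    filter_upwards [eventually_ge_atTop (max 1 ⌈‖z‖⌉₊)] with n hn
    have hn1 : (1 : ℕ) ≤ n := le_trans (le_max_left _ _) hn
    have hnR : (0 : ℝ) < n := by exact_mod_cast hn1
    have hn1R : (1 : ℝ) ≤ n := by exact_mod_cast hn1
    have hz_le : ‖z‖ ≤ (n : ℝ) := by
      calc ‖z‖ ≤ (⌈‖z‖⌉₊ : ℝ) := Nat.le_ceil _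
        _ ≤ n := by exact_mod_cast le_trans (le_max_right _ _) hn
    have hxb : ‖x n‖ ≤ ‖z‖ ^ 2 / (n : ℝ) ^ 2 := by
      have hw : ‖z / (n : ℂ)‖ ≤ 1 := by
        rw [norm_div, Complex.norm_natCast, div_le_one hnR]
        exact hz_le
      have hxx := xterm_bound hw
      simp only [hx]
      calc ‖(1 - Complex.cos (z / n)) / 2‖ ≤ ‖z / (n : ℂ)‖ ^ 2 := hxx
        _ = ‖z‖ ^ 2 / (n : ℝ) ^ 2 := by rw [norm_div, Complex.norm_natCast, div_pow]
    intro m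
    rcases le_or_gt m n with hm | hm
    · have hnorm : ‖f n m‖ = (∏ i ∈ range m, ‖(n : ℂ) + 2 * (k : ℂ) + i‖) *
          (∏ i ∈ range m, ‖-(n : ℂ) + i‖) /
          ((ascPochhammer ℝ m).eval (k + 1 / 2) * m.factorial) * ‖x n‖ ^ m := by
        simp only [hf]
        rw [norm_mul, norm_div, norm_mul, norm_mul, norm_pow, hP_norm, Complex.norm_natCast,
          poch_eval_prod m ((n : ℂ) + 2 * (k : ℂ)), poch_eval_prod m (-(n : ℂ)),
          norm_prod, norm_prod]
      have hb1 : ∀ i ∈ range m, ‖(n : ℂ) + 2 * (k : ℂ) + i‖ ≤ (2 + 2 * k) * n := by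
        intro i hi
        have hi' : (i : ℝ) ≤ n := by
          have h := mem_range.mp hi
          exact_mod_cast le_of_lt (lt_of_lt_of_le h hm)
        have hcast : ((n : ℂ) + 2 * (k : ℂ) + i) = Complex.ofReal ((n : ℝ) + 2 * k + i) := by
          push_cast; ring
        rw [hcast, Complex.norm_real, Real.norm_eq_abs,
          abs_of_nonneg (by linarith [Nat.cast_nonneg (α := ℝ) i])]
        nlinarith [hi', mul_nonneg hk.le (sub_nonneg.mpr hn1R)]
      have hb2 : ∀ i ∈ range m, ‖-(n : ℂ) + i‖ ≤ (n : ℝ) := by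
        intro i hi
        have hi' : (i : ℝ) ≤ n := by
          have h := mem_range.mp hi
          exact_mod_cast le_of_lt (lt_of_lt_of_le h hm)
        have hcast : (-(n : ℂ) + i) = Complex.ofReal ((i : ℝ) - n) := by push_cast; ring
        rw [hcast, Complex.norm_real, Real.norm_eq_abs, abs_of_nonpos (by linarith)]
        linarith [Nat.cast_nonneg (α := ℝ) i]
      have hprod1 : (∏ i ∈ range m, ‖(n : ℂ) + 2 * (k : ℂ) + i‖) ≤ ((2 + 2 * k) * n) ^ m := by
        calc (∏ i ∈ range m, ‖(n : ℂ) + 2 * (k : ℂ) + i‖)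
            ≤ ∏ _i ∈ range m, ((2 + 2 * k) * (n : ℝ)) :=
              Finset.prod_le_prod (fun i _ => norm_nonneg _) hb1
          _ = ((2 + 2 * k) * n) ^ m := by rw [prod_const, card_range]
      have hprod2 : (∏ i ∈ range m, ‖-(n : ℂ) + i‖) ≤ (n : ℝ) ^ m := by
        calc (∏ i ∈ range m, ‖-(n : ℂ) + i‖)
            ≤ ∏ _i ∈ range m, (n : ℝ) := Finset.prod_le_prod (fun i _ => norm_nonneg _) hb2
          _ = (n : ℝ) ^ m := by rw [prod_const, card_range]
      have hPr_ge : (m.factorial : ℝ) / 2 ^ m ≤ (ascPochhammer ℝ m).eval (k + 1 / 2) := by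
        rw [poch_eval_prod]
        have hfac_eq : (m.factorial : ℝ) / 2 ^ m = ∏ i ∈ range m, (((i : ℝ) + 1) / 2) := by
          rw [prod_div_distrib, prod_const, card_range]
          congr 1
          calc ((m.factorial : ℕ) : ℝ) = ((∏ x ∈ range m, (x + 1) : ℕ) : ℝ) := by
                rw [Finset.prod_range_add_one_eq_factorial]
            _ = ∏ x ∈ range m, ((x : ℝ) + 1) := by push_cast; rfl
        rw [hfac_eq]
        refine Finset.prod_le_prod (fun i _ => by positivity) (fun i _ => ?_)
        linarith [Nat.cast_nonneg (α := ℝ) i]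
      have hfacpos : (0 : ℝ) < m.factorial := by exact_mod_cast m.factorial_pos
      have h2m : (0 : ℝ) < (m.factorial : ℝ) / 2 ^ m := by positivity
      rw [hnorm]
      calc (∏ i ∈ range m, ‖(n : ℂ) + 2 * (k : ℂ) + i‖) * (∏ i ∈ range m, ‖-(n : ℂ) + i‖) /
            ((ascPochhammer ℝ m).eval (k + 1 / 2) * m.factorial) * ‖x n‖ ^ m
          ≤ ((2 + 2 * k) * n) ^ m * (n : ℝ) ^ m / ((m.factorial : ℝ) / 2 ^ m * m.factorial) *
            (‖z‖ ^ 2 / (n : ℝ) ^ 2) ^ m := by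
            gcongr
        _ = ((2 + 2 * k) * 2 * ‖z‖ ^ 2) ^ m / ((m.factorial : ℝ) * m.factorial) := by
            have hbase : ((2 + 2 * k) * (n : ℝ)) * (n : ℝ) * (‖z‖ ^ 2 / (n : ℝ) ^ 2)
                = (2 + 2 * k) * ‖z‖ ^ 2 := by
              field_simp
            have hre : (2 + 2 * k) * 2 * ‖z‖ ^ 2 = ((2 + 2 * k) * ‖z‖ ^ 2) * 2 := by ring
            rw [div_mul_eq_mul_div (((2 + 2 * k) * (n : ℝ)) ^ m * (n : ℝ) ^ m)
                ((m.factorial : ℝ) / 2 ^ m * m.factorial) ((‖z‖ ^ 2 / (n : ℝ) ^ 2) ^ m),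
              ← mul_pow, ← mul_pow, hbase, hre,
              mul_pow ((2 + 2 * k) * ‖z‖ ^ 2) (2 : ℝ) m,
              div_mul_eq_mul_div (m.factorial : ℝ) ((2 : ℝ) ^ m) (m.factorial : ℝ),
              div_div_eq_mul_div]
        _ ≤ ((2 + 2 * k) * 2 * ‖z‖ ^ 2) ^ m / m.factorial := by
            have hone : (1 : ℝ) ≤ (m.factorial : ℝ) := by exact_mod_cast m.factorial_pos
            gcongr
            all_goals nlinarith [hone, hfacpos]
    · rw [hzero n m hm, norm_zero]
      positivity
  -- assemble
  have main := tendsto_tsum_of_dominated_convergence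
    (Real.summable_pow_div_factorial ((2 + 2 * k) * 2 * ‖z‖ ^ 2)) hlim hbound
  rw [hRHS]
  apply main.congr
  intro n
  refine tsum_eq_sum fun m hm => hzero n m ?_
  simp only [Finset.mem_range] at hm
  omega
end

section
/- Let λ, ν be elements of the weight lattice P of a crystallographic root system R with positive system R₊, with ν ⊴ λ in the order defined by: ν ⊴ λ iff ν = λ, or λ₊ − ν₊ ∈ Q₊ \ {0}, or (λ₊ = ν₊ and λ ≤ ν in dominance order), where μ₊ denotes the unique dominant element in the W-orbit of μ. Then ν lies in the closed convex hull C(λ) of the W-orbit of λ. -/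
open RealInnerProductSpace

/-- The set of reflections `σ_α`, `α ∈ R`, as linear automorphisms. -/
def rootReflections {E : Type*} [NormedAddCommGroup E] [InnerProductSpace ℝ E]
    (R : Finset E) : Set (E ≃ₗ[ℝ] E) :=
  {w | ∃ α ∈ R, ∀ x, w x = x - (2 * ⟪x, α⟫ / ⟪α, α⟫) • α}

/-- The Weyl group generated by the reflections of the root system `R`. -/
def weylGroup {E : Type*} [NormedAddCommGroup E] [InnerProductSpace ℝ E]
    (R : Finset E) : Subgroup (E ≃ₗ[ℝ] E) :=
  Subgroup.closure (rootReflections R)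

/-- The `W`-orbit of `x`. -/
def weylOrbit {E : Type*} [NormedAddCommGroup E] [InnerProductSpace ℝ E]
    (R : Finset E) (x : E) : Set E :=
  {y | ∃ w ∈ weylGroup R, y = w x}

/-- The ℤ₊-span of the positive system `Rplus`. -/
def QPlus {E : Type*} [NormedAddCommGroup E] [InnerProductSpace ℝ E]
    (Rplus : Finset E) : Set E :=
  {y | ∃ c : E → ℕ, y = ∑ α ∈ Rplus, (c α : ℝ) • α}

section Aux

variable {E : Type*} [NormedAddCommGroup E] [InnerProductSpace ℝ E]

/-- The reflection in the root `α` as a linear automorphism. -/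
noncomputable def rootSigma (α : E) (hα : α ≠ 0) : E ≃ₗ[ℝ] E :=
  Module.reflection (f := (2 / ⟪α, α⟫ : ℝ) • (innerₛₗ ℝ α)) (x := α) (by
    have h : ⟪α, α⟫ ≠ (0 : ℝ) := fun h => hα ((inner_self_eq_zero (𝕜 := ℝ)).mp h)
    simp only [LinearMap.smul_apply, innerₛₗ_apply_apply, smul_eq_mul]
    field_simp)

lemma rootSigma_apply (α : E) (hα : α ≠ 0) (x : E) :
    rootSigma α hα x = x - (2 * ⟪x, α⟫ / ⟪α, α⟫) • α := by
  rw [rootSigma, Module.reflection_apply]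
  congr 1
  simp only [LinearMap.smul_apply, innerₛₗ_apply_apply, smul_eq_mul]
  rw [real_inner_comm α x]
  ring_nf

lemma rootSigma_mem (R : Finset E) (hR0 : ∀ α ∈ R, α ≠ 0) {α : E} (hα : α ∈ R) :
    rootSigma α (hR0 α hα) ∈ weylGroup R :=
  Subgroup.subset_closure ⟨α, hα, fun x => rootSigma_apply α (hR0 α hα) x⟩

lemma weylGroup_inner (R : Finset E) (hR0 : ∀ α ∈ R, α ≠ 0) {w : E ≃ₗ[ℝ] E}
    (hw : w ∈ weylGroup R) : ∀ x y : E, ⟪w x, w y⟫ = ⟪x, y⟫ := by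
  induction hw using Subgroup.closure_induction with
  | mem w hwmem =>
    obtain ⟨α, hαR, hwα⟩ := hwmem
    have hα : α ≠ 0 := hR0 α hαR
    have hαα : ⟪α, α⟫ ≠ (0 : ℝ) := fun h => hα ((inner_self_eq_zero (𝕜 := ℝ)).mp h)
    intro x y
    rw [hwα x, hwα y]
    simp only [inner_sub_left, inner_sub_right, real_inner_smul_left, real_inner_smul_right]
    rw [real_inner_comm α x, real_inner_comm α y]
    field_simp
    ring
  | one => intro x y; simp
  | mul w w' _ _ hw hw' =>
    intro x y
    have : (w * w') x = w (w' x) := rfl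
    rw [this, show (w * w') y = w (w' y) from rfl, hw, hw']
  | inv w _ hw =>
    intro x y
    have h1 : w (w⁻¹ x) = x := w.apply_symm_apply x
    have h2 : w (w⁻¹ y) = y := w.apply_symm_apply y
    calc ⟪w⁻¹ x, w⁻¹ y⟫ = ⟪w (w⁻¹ x), w (w⁻¹ y)⟫ := (hw _ _).symm
    _ = ⟪x, y⟫ := by rw [h1, h2]

lemma weylOrbit_mem_self (R : Finset E) (x : E) : x ∈ weylOrbit R x :=
  ⟨1, one_mem _, rfl⟩

lemma weylOrbit_smul_mem (R : Finset E) {w : E ≃ₗ[ℝ] E} (hw : w ∈ weylGroup R)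
    {x y : E} (hy : y ∈ weylOrbit R x) : w y ∈ weylOrbit R x := by
  obtain ⟨w', hw', rfl⟩ := hy
  exact ⟨w * w', mul_mem hw hw', rfl⟩

variable [FiniteDimensional ℝ E]

lemma K_invariant (R : Finset E) (lam : E) {w : E ≃ₗ[ℝ] E} (hw : w ∈ weylGroup R)
    {x : E} (hx : x ∈ closure (convexHull ℝ (weylOrbit R lam))) :
    w x ∈ closure (convexHull ℝ (weylOrbit R lam)) := by
  have hcont : Continuous w := w.toLinearMap.continuous_of_finiteDimensional
  have himg : w '' weylOrbit R lam ⊆ weylOrbit R lam := by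
    rintro _ ⟨y, hy, rfl⟩
    exact weylOrbit_smul_mem R hw hy
  have h1 : w x ∈ w '' closure (convexHull ℝ (weylOrbit R lam)) := ⟨x, hx, rfl⟩
  have h2 : w '' closure (convexHull ℝ (weylOrbit R lam)) ⊆
      closure (w '' convexHull ℝ (weylOrbit R lam)) :=
    image_closure_subset_closure_image hcont
  have h3 : w '' convexHull ℝ (weylOrbit R lam) = convexHull ℝ (w '' weylOrbit R lam) :=
    w.toLinearMap.image_convexHull _
  refine closure_mono ?_ (h2 h1)
  rw [h3]
  exact convexHull_mono himg

end Aux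

/-- If `λ, ν` are weights of a reduced crystallographic root system with `ν ⊴ λ`
(in the order used for Heckman-Opdam polynomials), then `ν` lies in the closed convex
hull `C(λ)` of the Weyl group orbit of `λ`. -/
theorem mem_closedConvexHull_orbit_of_le
    {E : Type*} [NormedAddCommGroup E] [InnerProductSpace ℝ E] [FiniteDimensional ℝ E]
    (R : Finset E)
    (hR0 : ∀ α ∈ R, α ≠ 0)
    (hspan : Submodule.span ℝ (R : Set E) = ⊤)
    (hreduced : ∀ α ∈ R, ∀ r : ℝ, r • α ∈ (R : Set E) → r = 1 ∨ r = -1)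
    (hcrys : ∀ α ∈ R, ∀ β ∈ R, ∃ n : ℤ, 2 * ⟪β, α⟫ / ⟪α, α⟫ = (n : ℝ))
    (hRinv : ∀ α ∈ R, ∀ β ∈ R, β - (2 * ⟪β, α⟫ / ⟪α, α⟫) • α ∈ R)
    (Rplus : Finset E)
    (hpos : (R : Set E) = (Rplus : Set E) ∪ (-(Rplus : Set E)))
    (hdisj : Disjoint (Rplus : Set E) (-(Rplus : Set E)))
    (lam nu : E)
    -- `lam` and `nu` belong to the weight lattice `P`
    (hlamP : ∀ α ∈ R, ∃ n : ℤ, 2 * ⟪lam, α⟫ / ⟪α, α⟫ = (n : ℝ))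
    (hnuP : ∀ α ∈ R, ∃ n : ℤ, 2 * ⟪nu, α⟫ / ⟪α, α⟫ = (n : ℝ))
    -- `lamPlus`, `nuPlus` are the dominant representatives of the orbits of `lam`, `nu`
    (lamPlus nuPlus : E)
    (hlamPlus_orbit : lamPlus ∈ weylOrbit R lam)
    (hlamPlus_dom : ∀ α ∈ Rplus, 0 ≤ ⟪α, lamPlus⟫)
    (hnuPlus_orbit : nuPlus ∈ weylOrbit R nu)
    (hnuPlus_dom : ∀ α ∈ Rplus, 0 ≤ ⟪α, nuPlus⟫)
    -- the order `ν ⊴ λ`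
    (horder : nu = lam ∨ (lamPlus - nuPlus ∈ QPlus Rplus ∧ lamPlus ≠ nuPlus) ∨
      (lamPlus = nuPlus ∧ nu - lam ∈ QPlus Rplus)) :
    nu ∈ closure (convexHull ℝ (weylOrbit R lam)) := by
  set K := closure (convexHull ℝ (weylOrbit R lam)) with hK
  have horbK : weylOrbit R lam ⊆ K := fun y hy =>
    subset_closure (subset_convexHull ℝ _ hy)
  -- `Rplus ⊆ R`
  have hRplus_sub : ∀ α ∈ Rplus, α ∈ R := by
    intro α hα
    have : α ∈ (R : Set E) := by rw [hpos]; exact Or.inl hα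
    exact_mod_cast this
  -- it suffices to show `nuPlus ∈ K`
  have key : nuPlus ∈ K → nu ∈ K := by
    intro hnuPlusK
    obtain ⟨w, hwW, hw⟩ := hnuPlus_orbit
    have : w⁻¹ nuPlus = nu := by
      rw [hw]; exact w.symm_apply_apply nu
    rw [← this]
    exact K_invariant R lam (inv_mem hwW) hnuPlusK
  have hlamPlusK : lamPlus ∈ K := horbK hlamPlus_orbit
  rcases horder with h1 | h2 | h3
  · -- `nu = lam`
    rw [h1]; exact horbK (weylOrbit_mem_self R lam)
  · -- the main case: `lamPlus - nuPlus ∈ QPlus Rplus`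
    apply key
    obtain ⟨hQ, -⟩ := h2
    -- project `nuPlus` onto `K`
    have hKconv : Convex ℝ K := (convex_convexHull ℝ _).closure
    have hKne : K.Nonempty := ⟨lam, horbK (weylOrbit_mem_self R lam)⟩
    have hKcomp : IsComplete K := isClosed_closure.isComplete
    obtain ⟨p, hpK, hp⟩ := exists_norm_eq_iInf_of_complete_convex hKne hKcomp hKconv nuPlus
    rw [norm_eq_iInf_iff_real_inner_le_zero hKconv hpK] at hp
    -- the displacement `u` pairs nonnegatively with every positive root
    set u := nuPlus - p with hu
    have hdom_u : ∀ α ∈ Rplus, 0 ≤ ⟪u, α⟫ := by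
      intro α hαp
      by_contra hneg
      push_neg at hneg
      have hαR : α ∈ R := hRplus_sub α hαp
      have hα0 : α ≠ 0 := hR0 α hαR
      have hαα : (0 : ℝ) < ⟪α, α⟫ := lt_of_le_of_ne real_inner_self_nonneg (fun h => hα0 ((inner_self_eq_zero (𝕜 := ℝ)).mp h.symm))
      -- apply the variational inequality at `σ_α p ∈ K`
      have hσp : rootSigma α hα0 p ∈ K := K_invariant R lam (rootSigma_mem R hR0 hαR) hpK
      have hVI := hp _ hσp
      rw [rootSigma_apply] at hVI
      have hVI' : (2 * ⟪p, α⟫ / ⟪α, α⟫) * ⟪u, α⟫ ≥ 0 := by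
        have : p - (2 * ⟪p, α⟫ / ⟪α, α⟫) • α - p = -((2 * ⟪p, α⟫ / ⟪α, α⟫) • α) := by abel
        rw [this, inner_neg_right, real_inner_smul_right] at hVI
        linarith
      -- hence `⟪p, α⟫ ≤ 0`, so `⟪nuPlus, α⟫ < 0`, contradicting dominance
      have hpα : ⟪p, α⟫ ≤ 0 := by
        by_contra hpos'
        push_neg at hpos'
        have hc : 0 < 2 * ⟪p, α⟫ / ⟪α, α⟫ := by positivity
        nlinarith
      have : ⟪nuPlus, α⟫ < 0 := by
        have : ⟪nuPlus, α⟫ = ⟪u, α⟫ + ⟪p, α⟫ := by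
          rw [hu, inner_sub_left]; ring
        linarith
      have := hnuPlus_dom α hαp
      rw [real_inner_comm] at this
      linarith
    -- pairing with `q = lamPlus - nuPlus ∈ QPlus` is nonnegative
    have hq_nonneg : 0 ≤ ⟪u, lamPlus - nuPlus⟫ := by
      obtain ⟨c, hc⟩ := hQ
      rw [hc, inner_sum]
      apply Finset.sum_nonneg
      intro α hα
      rw [real_inner_smul_right]
      exact mul_nonneg (Nat.cast_nonneg _) (hdom_u α hα)
    -- but the variational inequality at `lamPlus` forces it to be `≤ -‖u‖²`
    have hVIlam := hp _ hlamPlusK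
    have hsplit : ⟪u, lamPlus - nuPlus⟫ = ⟪u, lamPlus - p⟫ - ⟪u, u⟫ := by
      rw [hu]
      simp only [inner_sub_right, inner_sub_left]
      ring
    have huu : ⟪u, u⟫ ≤ 0 := by
      rw [hsplit] at hq_nonneg
      linarith
    have hu0 : u = 0 := by
      have := real_inner_self_nonneg (x := u)
      have h0 : ⟪u, u⟫ = (0 : ℝ) := le_antisymm huu this
      exact (inner_self_eq_zero (𝕜 := ℝ)).mp h0
    have : nuPlus = p := by
      have := sub_eq_zero.mp hu0
      exact this
    rw [this]
    exact hpK
  · -- `lamPlus = nuPlus`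
    apply key
    rw [← h3.1]
    exact hlamPlusK
end

section
/- Let x be in the closed Weyl chamber C of a finite reflection group W on a Euclidean space 𝔞, and let C* be the dual cone of C. Then for y ∈ C: y ∈ C(x) (the closed convex hull of the orbit Wx) if and only if x − y ∈ C*. -/
open RealInnerProductSpace
open scoped Classical

namespace Kostant

variable {E : Type*} [NormedAddCommGroup E] [InnerProductSpace ℝ E]

noncomputable def rmap (α : E) : E →ₗ[ℝ] E where
  toFun x := x - (2 * ⟪x, α⟫ / ⟪α, α⟫) • α
  map_add' x y := by
    show (x+y) - _ • α = (x - _•α) + (y - _•α)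
    rw [inner_add_left]
    rw [show (2 * (⟪x,α⟫ + ⟪y,α⟫) / ⟪α,α⟫) = 2*⟪x,α⟫/⟪α,α⟫ + 2*⟪y,α⟫/⟪α,α⟫ by ring]
    rw [add_smul]; abel
  map_smul' c x := by
    show (c•x) - _ • α = c • (x - _•α)
    rw [real_inner_smul_left]
    rw [show (2 * (c * ⟪x,α⟫) / ⟪α,α⟫) = c * (2*⟪x,α⟫/⟪α,α⟫) by ring]
    rw [smul_sub, smul_smul]

lemma rmap_apply (α x : E) : rmap α x = x - (2 * ⟪x, α⟫ / ⟪α, α⟫) • α := rfl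

lemma inner_self_ne (α : E) (h : α ≠ 0) : ⟪α, α⟫ ≠ 0 := by
  rw [real_inner_self_eq_norm_sq]
  have : ‖α‖ ≠ 0 := by simpa using h
  positivity

lemma inner_self_pos' (α : E) (h : α ≠ 0) : 0 < ⟪α, α⟫ := by
  rw [real_inner_self_eq_norm_sq]
  have : ‖α‖ ≠ 0 := by simpa using h
  positivity

lemma rmap_zero (x : E) : rmap (0 : E) x = x := by
  simp [rmap_apply]

lemma rmap_invol (α : E) : Function.Involutive (rmap α) := by
  intro x
  rcases eq_or_ne α 0 with h | h
  · simp [h, rmap_zero]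
  · have hA : ⟪α, α⟫ ≠ 0 := inner_self_ne α h
    rw [rmap_apply, rmap_apply, inner_sub_left, real_inner_smul_left]
    rw [show 2 * (⟪x,α⟫ - 2*⟪x,α⟫/⟪α,α⟫*⟪α,α⟫) / ⟪α,α⟫ = -(2*⟪x,α⟫/⟪α,α⟫) by
      field_simp; ring]
    rw [neg_smul, sub_neg_eq_add, sub_add_cancel]

noncomputable def refl (α : E) : E ≃ₗ[ℝ] E :=
  LinearEquiv.ofInvolutive (rmap α) (rmap_invol α)

lemma refl_apply (α x : E) : refl α x = x - (2 * ⟪x, α⟫ / ⟪α, α⟫) • α := rfl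

lemma refl_mul_self (α : E) : refl α * refl α = 1 := by
  ext x
  exact rmap_invol α x

lemma refl_inv (α : E) : (refl α)⁻¹ = refl α :=
  inv_eq_of_mul_eq_one_left (refl_mul_self α)

lemma refl_inner (α x y : E) : ⟪refl α x, refl α y⟫ = ⟪x, y⟫ := by
  rcases eq_or_ne α 0 with h | h
  · simp [h, refl_apply]
  · have hA : ⟪α, α⟫ ≠ 0 := inner_self_ne α h
    rw [refl_apply, refl_apply, inner_sub_left, inner_sub_right, inner_sub_right,
      real_inner_smul_left, real_inner_smul_left, real_inner_smul_right, real_inner_smul_right,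
      real_inner_comm α x, real_inner_comm α y]
    field_simp
    ring

lemma refl_fix {α x : E} (h : ⟪x, α⟫ = 0) : refl α x = x := by
  rw [refl_apply, h]; simp

lemma refl_invol (α x : E) : refl α (refl α x) = x := rmap_invol α x

lemma refl_self_neg (α : E) (h : α ≠ 0) : refl α α = -α := by
  have hA : ⟪α, α⟫ ≠ 0 := inner_self_ne α h
  rw [refl_apply]
  rw [show 2*⟪α,α⟫/⟪α,α⟫ = 2 by field_simp]
  rw [two_smul]; abel

lemma refl_mem_rootReflections {R : Finset E} {α : E} (h : α ∈ R) :
    refl α ∈ rootReflections R := ⟨α, h, fun x => rfl⟩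

lemma refl_mem_weylGroup {R : Finset E} {α : E} (h : α ∈ R) :
    refl α ∈ weylGroup R := Subgroup.subset_closure (refl_mem_rootReflections h)

lemma refl_conj (w : E ≃ₗ[ℝ] E) (hw : ∀ a b, ⟪w a, w b⟫ = ⟪a, b⟫) (β : E) :
    refl (w β) = w * refl β * w⁻¹ := by
  ext z
  show refl (w β) z = w (refl β (w⁻¹ z))
  rw [refl_apply, refl_apply, map_sub, map_smul]
  have h1 : w (w⁻¹ z) = z := w.apply_symm_apply z
  have h2 : ⟪w⁻¹ z, β⟫ = ⟪z, w β⟫ := by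
    rw [← hw (w⁻¹ z) β, h1]
  rw [h1, h2, hw β β]

lemma rootReflections_eq_refl {R : Finset E} {w : E ≃ₗ[ℝ] E}
    (h : w ∈ rootReflections R) : ∃ α ∈ R, w = refl α := by
  obtain ⟨α, hα, hform⟩ := h
  exact ⟨α, hα, by ext x; rw [hform x]; rfl⟩

section W
variable {R : Finset E}

lemma weyl_inner : ∀ w ∈ weylGroup R, ∀ a b : E, ⟪w a, w b⟫ = ⟪a, b⟫ := by
  intro w hw
  induction hw using Subgroup.closure_induction with
  | mem w hw =>
      obtain ⟨α, _, rfl⟩ := rootReflections_eq_refl hw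
      exact refl_inner α
  | one => intro a b; rfl
  | mul w₁ w₂ h1 h2 ih1 ih2 =>
      intro a b
      show ⟪w₁ (w₂ a), w₁ (w₂ b)⟫ = _
      rw [ih1, ih2]
  | inv w h ih =>
      intro a b
      have := ih (w⁻¹ a) (w⁻¹ b)
      rwa [show w (w⁻¹ a) = a from w.apply_symm_apply a,
        show w (w⁻¹ b) = b from w.apply_symm_apply b, eq_comm] at this

lemma weyl_norm (w : E ≃ₗ[ℝ] E) (hw : w ∈ weylGroup R) (a : E) : ‖w a‖ = ‖a‖ := by
  have := weyl_inner w hw a a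
  rw [real_inner_self_eq_norm_sq, real_inner_self_eq_norm_sq] at this
  have h1 : (0:ℝ) ≤ ‖w a‖ := norm_nonneg _
  have h2 : (0:ℝ) ≤ ‖a‖ := norm_nonneg _
  nlinarith

lemma weyl_root (hRinv : ∀ α ∈ R, ∀ β ∈ R, β - (2 * ⟪β, α⟫ / ⟪α, α⟫) • α ∈ R) :
    ∀ w ∈ weylGroup R, ∀ α ∈ R, w α ∈ R := by
  intro w hw
  induction hw using Subgroup.closure_induction with
  | mem w hw =>
      obtain ⟨α, hα, rfl⟩ := rootReflections_eq_refl hw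
      intro β hβ
      exact hRinv α hα β hβ
  | one => intro β hβ; exact hβ
  | mul w₁ w₂ h1 h2 ih1 ih2 =>
      intro β hβ
      exact ih1 _ (ih2 _ hβ)
  | inv w h ih =>
      intro β hβ
      classical
      have himg : R.image (fun a => w a) = R := by
        apply Finset.eq_of_subset_of_card_le
        · intro b hb
          obtain ⟨a, ha, rfl⟩ := Finset.mem_image.mp hb
          exact ih a ha
        · rw [Finset.card_image_of_injective _ w.injective]
      obtain ⟨a, ha, hab⟩ := Finset.mem_image.mp (himg ▸ hβ)
      have : w⁻¹ β = a := by
        rw [← hab]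
        exact w.symm_apply_apply a
      rw [show w⁻¹ β = a from this]
      exact ha

lemma weylGroup_finite (hspan : Submodule.span ℝ (R : Set E) = ⊤)
    (hRinv : ∀ α ∈ R, ∀ β ∈ R, β - (2 * ⟪β, α⟫ / ⟪α, α⟫) • α ∈ R) :
    Finite (weylGroup R) := by
  have : Function.Injective
      (fun w : weylGroup R => (fun α : R => (⟨w.1 α, weyl_root hRinv w.1 w.2 α α.2⟩ : R))) := by
    intro w w' h
    have heq : ∀ α ∈ R, w.1 α = w'.1 α := by
      intro α hα
      have := congrFun h ⟨α, hα⟩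
      exact congrArg Subtype.val this
    apply Subtype.ext
    apply LinearEquiv.toLinearMap_injective
    apply LinearMap.ext_on hspan
    intro a ha
    exact heq a ha
  exact Finite.of_injective _ this

lemma weylOrbit_eq_range (x : E) :
    weylOrbit R x = Set.range (fun w : weylGroup R => w.1 x) := by
  ext z
  constructor
  · rintro ⟨w, hw, rfl⟩; exact ⟨⟨w, hw⟩, rfl⟩
  · rintro ⟨⟨w, hw⟩, rfl⟩; exact ⟨w, hw, rfl⟩

lemma weylOrbit_finite (hspan : Submodule.span ℝ (R : Set E) = ⊤)
    (hRinv : ∀ α ∈ R, ∀ β ∈ R, β - (2 * ⟪β, α⟫ / ⟪α, α⟫) • α ∈ R) (x : E) :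
    (weylOrbit R x).Finite := by
  rw [weylOrbit_eq_range]
  have := weylGroup_finite hspan hRinv
  exact Set.finite_range _

lemma self_mem_weylOrbit (x : E) : x ∈ weylOrbit R x := ⟨1, Subgroup.one_mem _, rfl⟩

lemma weylOrbit_smul {x z : E} (hz : z ∈ weylOrbit R x) {w : E ≃ₗ[ℝ] E}
    (hw : w ∈ weylGroup R) : w z ∈ weylOrbit R x := by
  obtain ⟨w', hw', rfl⟩ := hz
  exact ⟨w * w', Subgroup.mul_mem _ hw hw', rfl⟩

end W

section Cone
variable {R : Finset E}

/-- nonnegative combinations of a finite set -/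
def cone (T : Finset E) : Set E :=
  {x | ∃ c : E → ℝ, (∀ β ∈ T, 0 ≤ c β) ∧ x = ∑ β ∈ T, c β • β}

lemma mem_cone_self {T : Finset E} {β : E} (h : β ∈ T) : β ∈ cone T := by
  classical
  refine ⟨fun γ => if γ = β then 1 else 0, fun γ _ => by positivity, ?_⟩
  rw [Finset.sum_eq_single β]
  · simp
  · intro γ hγ hne; simp [hne]
  · intro hβ; exact absurd h hβ

lemma cone_zero (T : Finset E) : (0:E) ∈ cone T :=
  ⟨fun _ => 0, fun _ _ => le_refl _, by simp⟩

lemma cone_add {T : Finset E} {a b : E} (ha : a ∈ cone T) (hb : b ∈ cone T) :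
    a + b ∈ cone T := by
  obtain ⟨c, hc, rfl⟩ := ha
  obtain ⟨d, hd, rfl⟩ := hb
  refine ⟨fun γ => c γ + d γ, fun γ hγ => add_nonneg (hc γ hγ) (hd γ hγ), ?_⟩
  rw [← Finset.sum_add_distrib]
  congr 1; ext γ; rw [add_smul]

lemma cone_smul {T : Finset E} {a : E} {r : ℝ} (hr : 0 ≤ r) (ha : a ∈ cone T) :
    r • a ∈ cone T := by
  obtain ⟨c, hc, rfl⟩ := ha
  refine ⟨fun γ => r * c γ, fun γ hγ => mul_nonneg hr (hc γ hγ), ?_⟩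
  rw [Finset.smul_sum]
  congr 1; ext γ; rw [smul_smul]

lemma cone_sum {T : Finset E} {ι : Type*} (s : Finset ι) (f : ι → E)
    (h : ∀ i ∈ s, f i ∈ cone T) : (∑ i ∈ s, f i) ∈ cone T := by
  classical
  induction s using Finset.induction_on with
  | empty => simpa using cone_zero T
  | insert _ _ hni ih =>
      rename_i a s
      rw [Finset.sum_insert hni]
      exact cone_add (h a (Finset.mem_insert_self a s))
        (ih (fun i hi => h i (Finset.mem_insert_of_mem hi)))

lemma cone_subset_of_subset_cone {T D : Finset E} (h : ∀ β ∈ T, β ∈ cone D) :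
    cone T ⊆ cone D := by
  rintro x ⟨c, hc, rfl⟩
  exact cone_sum T _ (fun β hβ => cone_smul (hc β hβ) (h β hβ))

lemma cone_mono {T T' : Finset E} (h : T ⊆ T') : cone T ⊆ cone T' :=
  cone_subset_of_subset_cone (fun β hβ => mem_cone_self (h hβ))

lemma inner_nonneg_of_cone {T : Finset E} {v x : E}
    (hv : ∀ β ∈ T, 0 ≤ ⟪β, v⟫) (hx : x ∈ cone T) : 0 ≤ ⟪x, v⟫ := by
  obtain ⟨c, hc, rfl⟩ := hx
  rw [sum_inner]
  apply Finset.sum_nonneg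
  intro β hβ
  rw [real_inner_smul_left]
  exact mul_nonneg (hc β hβ) (hv β hβ)

end Cone

open Classical in
/-- A positive root system with a strictly separating vector `u`. -/
structure PosSys (E : Type*) [NormedAddCommGroup E] [InnerProductSpace ℝ E] where
  R : Finset E
  u : E
  hR0 : ∀ α ∈ R, α ≠ 0
  hspan : Submodule.span ℝ (R : Set E) = ⊤
  hreduced : ∀ α ∈ R, ∀ r : ℝ, r • α ∈ (R : Set E) → r = 1 ∨ r = -1
  hRinv : ∀ α ∈ R, ∀ β ∈ R, β - (2 * ⟪β, α⟫ / ⟪α, α⟫) • α ∈ R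
  hsymm : ∀ α ∈ R, -α ∈ R
  hu : ∀ α ∈ R, ⟪α, u⟫ ≠ 0

namespace PosSys

variable {E : Type*} [NormedAddCommGroup E] [InnerProductSpace ℝ E] (S : PosSys E)

open Classical in
noncomputable def P : Finset E := S.R.filter (fun α => 0 < ⟪α, S.u⟫)

lemma mem_P {α : E} : α ∈ S.P ↔ α ∈ S.R ∧ 0 < ⟪α, S.u⟫ := by
  classical
  simp [P]

lemma P_subset : S.P ⊆ S.R := fun α h => ((S.mem_P).mp h).1

lemma u_pos {α : E} (h : α ∈ S.P) : 0 < ⟪α, S.u⟫ := ((S.mem_P).mp h).2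

lemma P_ne_zero {α : E} (h : α ∈ S.P) : α ≠ 0 := S.hR0 α (S.P_subset h)

lemma root_dichotomy {α : E} (h : α ∈ S.R) : α ∈ S.P ∨ -α ∈ S.P := by
  rcases lt_or_gt_of_ne (S.hu α h) with hneg | hpos
  · right
    rw [S.mem_P, inner_neg_left]
    exact ⟨S.hsymm α h, by linarith⟩
  · left
    exact (S.mem_P).mpr ⟨h, hpos⟩

lemma not_neg_mem_P {α : E} (h : α ∈ S.P) : -α ∉ S.P := by
  intro h'
  have h1 := S.u_pos h
  have h2 := S.u_pos h'
  rw [inner_neg_left] at h2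
  linarith

lemma refl_root {α β : E} (hα : α ∈ S.R) (hβ : β ∈ S.R) : refl α β ∈ S.R :=
  S.hRinv α hα β hβ

/-- The chamber. -/
def C : Set E := {v | ∀ α ∈ S.P, 0 ≤ ⟪α, v⟫}

lemma exists_simples : ∃ D : Finset E, D ⊆ S.P ∧ (∀ α ∈ S.P, α ∈ cone D) ∧
    ∀ D' : Finset E, D' ⊆ S.P → (∀ α ∈ S.P, α ∈ cone D') → D.card ≤ D'.card := by
  classical
  let 𝒟 := S.P.powerset.filter (fun D => ∀ α ∈ S.P, α ∈ cone D)
  have hne : 𝒟.Nonempty := by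
    refine ⟨S.P, ?_⟩
    simp only [𝒟, Finset.mem_filter, Finset.mem_powerset]
    exact ⟨subset_rfl, fun α hα => mem_cone_self hα⟩
  obtain ⟨D, hD, hmin⟩ := Finset.exists_min_image 𝒟 Finset.card hne
  simp only [𝒟, Finset.mem_filter, Finset.mem_powerset] at hD
  refine ⟨D, hD.1, hD.2, fun D' h1 h2 => ?_⟩
  apply hmin
  simp only [𝒟, Finset.mem_filter, Finset.mem_powerset]
  exact ⟨h1, h2⟩

noncomputable def simples : Finset E := S.exists_simples.choose

lemma simples_subset : S.simples ⊆ S.P := S.exists_simples.choose_spec.1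
lemma simples_cone : ∀ α ∈ S.P, α ∈ cone S.simples := S.exists_simples.choose_spec.2.1
lemma simples_min : ∀ D' : Finset E, D' ⊆ S.P → (∀ α ∈ S.P, α ∈ cone D') →
    S.simples.card ≤ D'.card := S.exists_simples.choose_spec.2.2

lemma simples_not_in_erase {δ : E} (hδ : δ ∈ S.simples)
    (h : δ ∈ cone (S.simples.erase δ)) : False := by
  classical
  have hsub : ∀ α ∈ S.P, α ∈ cone (S.simples.erase δ) := by
    intro α hα
    apply cone_subset_of_subset_cone (T := S.simples) ?_ (S.simples_cone α hα)
    intro β hβ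
    rcases eq_or_ne β δ with rfl | hne
    · exact h
    · exact mem_cone_self (Finset.mem_erase.mpr ⟨hne, hβ⟩)
  have := S.simples_min (S.simples.erase δ)
    (fun β hβ => S.simples_subset (Finset.mem_of_mem_erase hβ)) hsub
  rw [Finset.card_erase_of_mem hδ] at this
  have hpos : 0 < S.simples.card := Finset.card_pos.mpr ⟨δ, hδ⟩
  omega

lemma coeff_zero {f : E → ℝ} (hf : ∀ δ ∈ S.simples, 0 ≤ f δ)
    (h : ∑ δ ∈ S.simples, f δ • δ = 0) : ∀ δ ∈ S.simples, f δ = 0 := by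
  have hps : ∑ δ ∈ S.simples, f δ * ⟪δ, S.u⟫ = 0 := by
    have := congrArg (fun z => ⟪z, S.u⟫) h
    simpa [sum_inner, real_inner_smul_left] using this
  intro δ hδ
  have hterm : ∀ γ ∈ S.simples, 0 ≤ f γ * ⟪γ, S.u⟫ := fun γ hγ =>
    mul_nonneg (hf γ hγ) (le_of_lt (S.u_pos (S.simples_subset hγ)))
  have := (Finset.sum_eq_zero_iff_of_nonneg hterm).mp hps δ hδ
  have hu := S.u_pos (S.simples_subset hδ)
  rcases mul_eq_zero.mp this with h0 | h0
  · exact h0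
  · linarith

lemma P_mem_R {α : E} (h : α ∈ S.P) : α ∈ S.R := S.P_subset h

lemma simples_mem_P {δ : E} (h : δ ∈ S.simples) : δ ∈ S.P := S.simples_subset h

/-- A simple reflection permutes the positive roots other than the simple root itself. -/
lemma refl_simple {δ β : E} (hδ : δ ∈ S.simples) (hβ : β ∈ S.P) (hne : β ≠ δ) :
    refl δ β ∈ S.P ∧ refl δ β ≠ δ := by
  classical
  have hδP : δ ∈ S.P := S.simples_mem_P hδ
  have hδR : δ ∈ S.R := S.P_mem_R hδP
  have hβR : β ∈ S.R := S.P_mem_R hβ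
  have hδ0 : δ ≠ 0 := S.hR0 δ hδR
  have hγR : refl δ β ∈ S.R := S.refl_root hδR hβR
  have hback : refl δ (refl δ β) = β := rmap_invol δ β
  rcases S.root_dichotomy hγR with hpos | hneg
  · refine ⟨hpos, ?_⟩
    intro heq
    rw [heq, refl_self_neg δ hδ0] at hback
    exact S.not_neg_mem_P hδP (hback ▸ hβ)
  · exfalso
    set c := 2 * ⟪β, δ⟫ / ⟪δ, δ⟫ with hc_def
    have hγ_eq : refl δ β = β - c • δ := refl_apply δ β
    obtain ⟨d, hd, hdeq⟩ := S.simples_cone β hβ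
    obtain ⟨e, he, heeq⟩ := S.simples_cone (-(refl δ β)) hneg
    set f := fun δ' => d δ' + e δ' with hf_def
    have hsum : ∑ δ' ∈ S.simples, f δ' • δ'
        = (∑ δ' ∈ S.simples, d δ' • δ') + (∑ δ' ∈ S.simples, e δ' • δ') := by
      rw [← Finset.sum_add_distrib]
      exact Finset.sum_congr rfl (fun δ' _ => (add_smul _ _ _))
    have key : ∑ δ' ∈ S.simples, f δ' • δ' = c • δ := by
      rw [hsum, ← hdeq, ← heeq, hγ_eq]
      abel
    have hf0 : ∀ δ' ∈ S.simples, 0 ≤ f δ' :=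
      fun δ' h' => add_nonneg (hd δ' h') (he δ' h')
    have hsplit : f δ • δ + ∑ δ' ∈ S.simples.erase δ, f δ' • δ' = c • δ := by
      rw [Finset.add_sum_erase S.simples (fun x => f x • x) hδ]
      exact key
    have herase : ∑ δ' ∈ S.simples.erase δ, f δ' • δ' = c • δ - f δ • δ :=
      eq_sub_of_add_eq' hsplit
    by_cases hc : c ≤ f δ
    · -- positive combination vanishes
      set g := fun δ' => if δ' = δ then f δ' - c else f δ' with hg_def
      have hg0 : ∀ δ' ∈ S.simples, 0 ≤ g δ' := by
        intro δ' h'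
        simp only [hg_def]
        split
        · rename_i hh; rw [hh]; linarith
        · exact hf0 δ' h'
      have hgsum : ∑ δ' ∈ S.simples, g δ' • δ' = 0 := by
        rw [← Finset.add_sum_erase S.simples (fun x => g x • x) hδ]
        have h2 : ∑ δ' ∈ S.simples.erase δ, g δ' • δ'
            = ∑ δ' ∈ S.simples.erase δ, f δ' • δ' := by
          apply Finset.sum_congr rfl
          intro δ' h'
          have : δ' ≠ δ := (Finset.mem_erase.mp h').1
          simp [hg_def, this]
        have h3 : g δ = f δ - c := by simp [hg_def]
        show g δ • δ + ∑ δ' ∈ S.simples.erase δ, g δ' • δ' = 0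
        rw [h2, herase, h3, sub_smul]
        abel
      have hzero := S.coeff_zero hg0 hgsum
      have hd_zero : ∀ δ' ∈ S.simples.erase δ, d δ' = 0 := by
        intro δ' h'
        have hmem := Finset.mem_of_mem_erase h'
        have hne' : δ' ≠ δ := (Finset.mem_erase.mp h').1
        have hz := hzero δ' hmem
        simp only [hg_def, if_neg hne'] at hz
        have h5 := hd δ' hmem
        have h6 := he δ' hmem
        simp only [hf_def] at hz
        linarith
      have hβ_mult : β = d δ • δ := by
        rw [hdeq, ← Finset.add_sum_erase S.simples (fun x => d x • x) hδ]
        have : ∑ δ' ∈ S.simples.erase δ, d δ' • δ' = 0 := by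
          apply Finset.sum_eq_zero
          intro δ' h'
          rw [hd_zero δ' h', zero_smul]
        show d δ • δ + ∑ δ' ∈ S.simples.erase δ, d δ' • δ' = d δ • δ
        rw [this, add_zero]
      have hred := S.hreduced δ hδR (d δ) (by rw [← hβ_mult]; exact_mod_cast hβR)
      rcases hred with h1 | h1
      · rw [h1, one_smul] at hβ_mult
        exact hne hβ_mult
      · rw [h1, neg_one_smul] at hβ_mult
        exact S.not_neg_mem_P hδP (hβ_mult ▸ hβ)
    · push_neg at hc
      apply S.simples_not_in_erase hδ
      have hsum_erase : ∑ δ' ∈ S.simples.erase δ, f δ' • δ' = (c - f δ) • δ := by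
        rw [sub_smul]
        exact herase
      have hmem : ((c - f δ)⁻¹ * (c - f δ)) • δ ∈ cone (S.simples.erase δ) := by
        rw [← smul_smul, ← hsum_erase]
        apply cone_smul (inv_nonneg.mpr (by linarith))
        exact ⟨f, fun δ' h' => hf0 δ' (Finset.mem_of_mem_erase h'), rfl⟩
      rwa [inv_mul_cancel₀ (by linarith : c - f δ ≠ 0), one_smul] at hmem

lemma refl_simple_ne {δ β : E} (hδ : δ ∈ S.simples) (hβ : β ∈ S.P) (hne : β ≠ δ) :
    refl δ β ∈ S.P := (S.refl_simple hδ hβ hne).1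

open Classical in
noncomputable def NN (w : E ≃ₗ[ℝ] E) : Finset E := S.P.filter (fun α => -(w α) ∈ S.P)

lemma mem_NN {w : E ≃ₗ[ℝ] E} {α : E} : α ∈ S.NN w ↔ α ∈ S.P ∧ -(w α) ∈ S.P := by
  classical
  simp [NN]

lemma NN_card_dec {w : E ≃ₗ[ℝ] E} {δ : E} (hδ : δ ∈ S.simples) (h : -(w δ) ∈ S.P) :
    (S.NN (w * refl δ)).card + 1 = (S.NN w).card := by
  classical
  have hδP : δ ∈ S.P := S.simples_mem_P hδ
  have hδ0 : δ ≠ 0 := S.P_ne_zero hδP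
  have happ : ∀ α : E, (w * refl δ) α = w (refl δ α) := fun α => rfl
  have him : S.NN (w * refl δ) = ((S.NN w).erase δ).image (refl δ) := by
    ext α
    rw [Finset.mem_image, S.mem_NN]
    constructor
    · rintro ⟨hαP, hαneg⟩
      have hαδ : α ≠ δ := by
        intro heq
        rw [heq, happ, refl_self_neg δ hδ0, map_neg, neg_neg] at hαneg
        exact S.not_neg_mem_P hαneg h
      obtain ⟨hmem, hne⟩ := S.refl_simple hδ hαP hαδ
      refine ⟨refl δ α, ?_, refl_invol δ α⟩
      rw [Finset.mem_erase, S.mem_NN]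
      rw [happ] at hαneg
      exact ⟨hne, hmem, hαneg⟩
    · rintro ⟨β, hβ, rfl⟩
      rw [Finset.mem_erase, S.mem_NN] at hβ
      obtain ⟨hneδ, hβP, hβneg⟩ := hβ
      obtain ⟨hmem, _⟩ := S.refl_simple hδ hβP hneδ
      refine ⟨hmem, ?_⟩
      rw [happ, refl_invol δ β]
      exact hβneg
  rw [him, Finset.card_image_of_injective _ (refl δ).injective,
    Finset.card_erase_of_mem (S.mem_NN.mpr ⟨hδP, h⟩)]
  have : 0 < (S.NN w).card := Finset.card_pos.mpr ⟨δ, S.mem_NN.mpr ⟨hδP, h⟩⟩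
  omega

lemma NN_card_inc {w : E ≃ₗ[ℝ] E} {δ : E} (hδ : δ ∈ S.simples) (h : w δ ∈ S.P) :
    (S.NN (w * refl δ)).card = (S.NN w).card + 1 := by
  classical
  have hδP : δ ∈ S.P := S.simples_mem_P hδ
  have hδ0 : δ ≠ 0 := S.P_ne_zero hδP
  have happ : ∀ α : E, (w * refl δ) α = w (refl δ α) := fun α => rfl
  have hδnot : δ ∉ S.NN w := by
    rw [S.mem_NN]
    rintro ⟨-, hcon⟩
    exact S.not_neg_mem_P h hcon
  have him : S.NN (w * refl δ) = insert δ ((S.NN w).image (refl δ)) := by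
    ext α
    rw [Finset.mem_insert, Finset.mem_image, S.mem_NN]
    constructor
    · rintro ⟨hαP, hαneg⟩
      rcases eq_or_ne α δ with rfl | hαδ
      · exact Or.inl rfl
      · obtain ⟨hmem, hne⟩ := S.refl_simple hδ hαP hαδ
        refine Or.inr ⟨refl δ α, ?_, refl_invol δ α⟩
        rw [S.mem_NN]
        rw [happ] at hαneg
        exact ⟨hmem, hαneg⟩
    · rintro (heq | ⟨β, hβ, rfl⟩)
      · subst heq
        refine ⟨hδP, ?_⟩
        rw [happ, refl_self_neg α (S.P_ne_zero hδP), map_neg, neg_neg]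
        exact h
      · rw [S.mem_NN] at hβ
        obtain ⟨hβP, hβneg⟩ := hβ
        have hneδ : β ≠ δ := by rintro rfl; exact hδnot (S.mem_NN.mpr ⟨hβP, hβneg⟩)
        obtain ⟨hmem, _⟩ := S.refl_simple hδ hβP hneδ
        refine ⟨hmem, ?_⟩
        rw [happ, refl_invol δ β]
        exact hβneg
  have hδnotim : δ ∉ (S.NN w).image (refl δ) := by
    rw [Finset.mem_image]
    rintro ⟨β, hβ, heq⟩
    have hβδ : β = -δ := by
      have h2 := refl_invol δ β
      rw [heq, refl_self_neg δ hδ0] at h2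
      exact h2.symm
    have hβP : β ∈ S.P := (S.mem_NN.mp hβ).1
    rw [hβδ] at hβP
    exact S.not_neg_mem_P hδP hβP
  rw [him, Finset.card_insert_of_notMem hδnotim,
    Finset.card_image_of_injective _ (refl δ).injective]

def IsSimpleRefl (g : E ≃ₗ[ℝ] E) : Prop := ∃ δ ∈ S.simples, g = refl δ

noncomputable def Wsim : Subgroup (E ≃ₗ[ℝ] E) := Subgroup.closure {g | S.IsSimpleRefl g}

lemma simple_refl_mem_weylGroup {g : E ≃ₗ[ℝ] E} (h : S.IsSimpleRefl g) :
    g ∈ weylGroup S.R := by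
  obtain ⟨δ, hδ, rfl⟩ := h
  exact refl_mem_weylGroup (S.P_mem_R (S.simples_mem_P hδ))

lemma Wsim_le : S.Wsim ≤ weylGroup S.R := by
  apply (Subgroup.closure_le _).mpr
  intro g hg
  exact S.simple_refl_mem_weylGroup hg

lemma refl_neg (α : E) : refl (-α) = refl α := by
  ext x
  rw [refl_apply, refl_apply, inner_neg_right, inner_neg_neg]
  rw [show 2 * -⟪x,α⟫ / ⟪α,α⟫ = -(2*⟪x,α⟫/⟪α,α⟫) by ring, neg_smul_neg]

/-- every positive-root reflection is a product of simple reflections -/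
lemma refl_mem_Wsim : ∀ α ∈ S.P, refl α ∈ S.Wsim := by
  classical
  have main : ∀ n : ℕ, ∀ α ∈ S.P,
      (S.P.filter (fun β => ⟪β, S.u⟫ < ⟪α, S.u⟫)).card = n → refl α ∈ S.Wsim := by
    intro n
    induction n using Nat.strong_induction_on with
    | _ n ih =>
      intro α hα hcard
      by_cases hαΔ : α ∈ S.simples
      · exact Subgroup.subset_closure ⟨α, hαΔ, rfl⟩
      · -- find a simple root with positive inner product with α
        obtain ⟨d, hd, hdeq⟩ := S.simples_cone α hα
        have hαα : 0 < ⟪α, α⟫ := inner_self_pos' α (S.hR0 α (S.P_mem_R hα))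
        have hsum : ⟪α, α⟫ = ∑ δ ∈ S.simples, d δ * ⟪δ, α⟫ := by
          nth_rewrite 1 [hdeq]
          rw [sum_inner]
          exact Finset.sum_congr rfl (fun δ _ => real_inner_smul_left _ _ _)
        have hex : ∃ δ ∈ S.simples, 0 < ⟪δ, α⟫ := by
          by_contra hcon
          push_neg at hcon
          have hle : ∑ δ ∈ S.simples, d δ * ⟪δ, α⟫ ≤ 0 := by
            apply Finset.sum_nonpos
            intro δ hδ
            have := hd δ hδ
            have := hcon δ hδ
            nlinarith
          rw [hsum] at hαα
          linarith
        obtain ⟨δ, hδ, hδα⟩ := hex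
        have hδP : δ ∈ S.P := S.simples_mem_P hδ
        have hδ0 : δ ≠ 0 := S.P_ne_zero hδP
        have hαδ : α ≠ δ := fun h => hαΔ (h ▸ hδ)
        have hβP : refl δ α ∈ S.P := S.refl_simple_ne hδ hα hαδ
        set β := refl δ α with hβ_def
        have hc : 0 < 2 * ⟪α, δ⟫ / ⟪δ, δ⟫ := by
          have h1 : 0 < ⟪δ, δ⟫ := inner_self_pos' δ hδ0
          have h2 : 0 < ⟪α, δ⟫ := by rw [real_inner_comm]; exact hδα
          positivity
        have hβu : ⟪β, S.u⟫ < ⟪α, S.u⟫ := by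
          rw [hβ_def, refl_apply, inner_sub_left, real_inner_smul_left]
          have := S.u_pos hδP
          nlinarith
        have hsub : (S.P.filter (fun γ => ⟪γ, S.u⟫ < ⟪β, S.u⟫)).card < n := by
          rw [← hcard]
          apply Finset.card_lt_card
          constructor
          · intro γ hγ
            rw [Finset.mem_filter] at hγ ⊢
            exact ⟨hγ.1, lt_trans hγ.2 hβu⟩
          · intro hcon
            have : β ∈ S.P.filter (fun γ => ⟪γ, S.u⟫ < ⟪β, S.u⟫) :=
              hcon (Finset.mem_filter.mpr ⟨hβP, hβu⟩)
            rw [Finset.mem_filter] at this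
            exact lt_irrefl _ this.2
        have hβW : refl β ∈ S.Wsim := ih _ hsub β hβP rfl
        have hδW : refl δ ∈ S.Wsim := Subgroup.subset_closure ⟨δ, hδ, rfl⟩
        have hconj : refl α = refl δ * refl β * refl δ := by
          have h1 : refl δ β = α := refl_invol δ α
          have h2 := refl_conj (refl δ) (refl_inner δ) β
          rw [h1, refl_inv] at h2
          exact h2
        rw [hconj]
        exact Subgroup.mul_mem _ (Subgroup.mul_mem _ hδW hβW) hδW
  intro α hα
  exact main _ α hα rfl

lemma weylGroup_le_Wsim : weylGroup S.R ≤ S.Wsim := by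
  apply (Subgroup.closure_le _).mpr
  intro g hg
  obtain ⟨α, hα, rfl⟩ := rootReflections_eq_refl hg
  rcases S.root_dichotomy hα with h | h
  · exact S.refl_mem_Wsim α h
  · have := S.refl_mem_Wsim _ h
    rwa [refl_neg] at this

lemma exists_simple_list {w : E ≃ₗ[ℝ] E} (hw : w ∈ weylGroup S.R) :
    ∃ L : List (E ≃ₗ[ℝ] E), (∀ g ∈ L, S.IsSimpleRefl g) ∧ L.prod = w := by
  have hmem : w ∈ S.Wsim := S.weylGroup_le_Wsim hw
  have hsub : w ∈ Submonoid.closure ({g | S.IsSimpleRefl g} ∪ {g | S.IsSimpleRefl g}⁻¹) := by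
    rw [← Subgroup.closure_toSubmonoid]
    exact hmem
  have hinv : ({g | S.IsSimpleRefl g} ∪ {g | S.IsSimpleRefl g}⁻¹ : Set (E ≃ₗ[ℝ] E))
      = {g | S.IsSimpleRefl g} := by
    apply Set.union_eq_self_of_subset_right
    intro g hg
    obtain ⟨δ, hδ, heq⟩ := hg
    refine ⟨δ, hδ, ?_⟩
    rw [← refl_inv, ← heq, inv_inv]
  rw [hinv] at hsub
  obtain ⟨L, hL, hprod⟩ := Submonoid.exists_list_of_mem_closure hsub
  exact ⟨L, hL, hprod⟩

lemma list_prod_mem_weylGroup {L : List (E ≃ₗ[ℝ] E)} (hL : ∀ g ∈ L, S.IsSimpleRefl g) :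
    L.prod ∈ weylGroup S.R :=
  Subgroup.list_prod_mem _ (fun g hg => S.simple_refl_mem_weylGroup (hL g hg))

/-- root tracking lemma -/
lemma track : ∀ (L : List (E ≃ₗ[ℝ] E)), (∀ g ∈ L, S.IsSimpleRefl g) → ∀ β ∈ S.P,
    -(L.prod β) ∈ S.P →
    ∃ (A : List (E ≃ₗ[ℝ] E)) (g : E ≃ₗ[ℝ] E) (B : List (E ≃ₗ[ℝ] E)),
      L = A ++ g :: B ∧ (g :: B).prod = B.prod * refl β := by
  intro L
  induction L with
  | nil =>
      intro _ β hβ hneg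
      simp only [List.prod_nil] at hneg
      have hb : -β ∈ S.P := by simpa using hneg
      exact absurd hb (S.not_neg_mem_P hβ)
  | cons g L₂ ih =>
      intro hL β hβ hneg
      have hg : S.IsSimpleRefl g := hL g List.mem_cons_self
      have hL₂ : ∀ g' ∈ L₂, S.IsSimpleRefl g' := fun g' h' => hL g' (List.mem_cons_of_mem g h')
      have hprodW : L₂.prod ∈ weylGroup S.R := S.list_prod_mem_weylGroup hL₂
      have hγR : L₂.prod β ∈ S.R :=
        weyl_root S.hRinv L₂.prod hprodW β (S.P_mem_R hβ)
      have hconsprod : (g :: L₂).prod β = g (L₂.prod β) := by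
        rw [List.prod_cons]; rfl
      rcases S.root_dichotomy hγR with hγP | hγneg
      · -- γ positive, g reflects it to negative: γ must be the simple root of g
        obtain ⟨e, he, rfl⟩ := hg
        rw [hconsprod] at hneg
        have hγe : L₂.prod β = e := by
          by_contra hne
          exact S.not_neg_mem_P (S.refl_simple_ne he hγP hne) hneg
        refine ⟨[], refl e, L₂, rfl, ?_⟩
        rw [List.prod_cons]
        have hconj := refl_conj L₂.prod (weyl_inner L₂.prod hprodW) β
        rw [hγe] at hconj
        rw [hconj]
        group
      · obtain ⟨A, g', B, hsplit, heq⟩ := ih hL₂ β hβ hγneg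
        exact ⟨g :: A, g', B, by rw [hsplit]; rfl, heq⟩

/-- deletion: a product of simple reflections with no inversions is the identity -/
lemma prod_eq_one_of_NN_zero : ∀ (k : ℕ) (L : List (E ≃ₗ[ℝ] E)), L.length = k →
    (∀ g ∈ L, S.IsSimpleRefl g) → (S.NN L.prod).card = 0 → L.prod = 1 := by
  intro k
  induction k using Nat.strong_induction_on with
  | _ k ih =>
    intro L hlen hL hNN
    rcases List.eq_nil_or_concat L with rfl | ⟨L', g, rfl⟩
    · simp
    · have hg : S.IsSimpleRefl g := hL g (by simp)
      obtain ⟨δ, hδ, rfl⟩ := hg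
      have hL' : ∀ g' ∈ L', S.IsSimpleRefl g' := fun g' h' => hL g' (by simp [h'])
      have hW' : L'.prod ∈ weylGroup S.R := S.list_prod_mem_weylGroup hL'
      have hprod : (L'.concat (refl δ)).prod = L'.prod * refl δ := by
        rw [List.concat_eq_append, List.prod_append, List.prod_singleton]
      have hδR : δ ∈ S.R := S.P_mem_R (S.simples_mem_P hδ)
      have hwδR : L'.prod δ ∈ S.R := weyl_root S.hRinv L'.prod hW' δ hδR
      rcases S.root_dichotomy hwδR with hP | hneg
      · rw [hprod] at hNN
        have := S.NN_card_inc hδ hP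
        omega
      · obtain ⟨A, g', B, hsplit, heq⟩ := S.track L' hL' δ (S.simples_mem_P hδ) hneg
        have heq' : g' * B.prod = B.prod * refl δ := by
          rw [← List.prod_cons]; exact heq
        have hprodeq : (L'.concat (refl δ)).prod = (A ++ B).prod := by
          rw [hprod, hsplit, List.prod_append, List.prod_cons, List.prod_append,
            heq', mul_assoc, mul_assoc, refl_mul_self, mul_one]
        have h1 : L'.length + 1 = k := by simpa using hlen
        have hlen2 : (A ++ B).length = k - 2 := by
          have h2 : A.length + (B.length + 1) = L'.length := by
            rw [hsplit]; simp
          simp only [List.length_append]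
          omega
        have hAB : ∀ g'' ∈ A ++ B, S.IsSimpleRefl g'' := by
          intro g'' h''
          rcases List.mem_append.mp h'' with h'' | h''
          · exact hL' g'' (by rw [hsplit]; simp [h''])
          · exact hL' g'' (by rw [hsplit]; simp [h''])
        have hk2 : k - 2 < k := by omega
        rw [hprodeq] at hNN ⊢
        exact ih (k - 2) hk2 (A ++ B) hlen2 hAB hNN

/-- The chamber intersects each orbit in at most one point. -/
lemma chamber_unique : ∀ (n : ℕ) (w : E ≃ₗ[ℝ] E), w ∈ weylGroup S.R →
    (S.NN w).card = n → ∀ x z : E, x ∈ S.C → z ∈ S.C → z = w x → z = x := by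
  intro n
  induction n using Nat.strong_induction_on with
  | _ n ih =>
    intro w hw hNN x z hx hz hzw
    rcases Nat.eq_zero_or_pos n with rfl | hpos
    · obtain ⟨L, hL, hprod⟩ := S.exists_simple_list hw
      have : L.prod = 1 := S.prod_eq_one_of_NN_zero L.length L rfl hL (by rw [hprod]; exact hNN)
      rw [hprod] at this
      rw [hzw, this]
      rfl
    · -- find a simple root sent to a negative root
      have hex : ∃ δ ∈ S.simples, -(w δ) ∈ S.P := by
        by_contra hcon
        push_neg at hcon
        have hall : ∀ δ ∈ S.simples, w δ ∈ S.P := by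
          intro δ hδ
          have hδR : δ ∈ S.R := S.P_mem_R (S.simples_mem_P hδ)
          have : w δ ∈ S.R := weyl_root S.hRinv w hw δ hδR
          rcases S.root_dichotomy this with h | h
          · exact h
          · exact absurd h (hcon δ hδ)
        obtain ⟨α₀, hα₀⟩ := Finset.card_pos.mp (hNN ▸ hpos)
        rw [S.mem_NN] at hα₀
        obtain ⟨hα₀P, hα₀neg⟩ := hα₀
        -- w α₀ is a nonneg combination of positive roots, contradiction
        obtain ⟨d, hd, hdeq⟩ := S.simples_cone α₀ hα₀P
        have hwcone : w α₀ ∈ cone S.P := by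
          have : w α₀ = ∑ δ ∈ S.simples, d δ • w δ := by
            rw [hdeq, map_sum]
            exact Finset.sum_congr rfl (fun δ _ => by rw [map_smul])
          rw [this]
          apply cone_sum
          intro δ hδ
          exact cone_smul (hd δ hδ) (mem_cone_self (hall δ hδ))
        have h1 : 0 ≤ ⟪w α₀, S.u⟫ :=
          inner_nonneg_of_cone (fun β hβ => le_of_lt (S.u_pos hβ)) hwcone
        have h2 : 0 < ⟪-(w α₀), S.u⟫ := S.u_pos hα₀neg
        rw [inner_neg_left] at h2
        linarith
      obtain ⟨δ, hδ, hneg⟩ := hex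
      have hδP : δ ∈ S.P := S.simples_mem_P hδ
      have h1 : 0 ≤ ⟪δ, x⟫ := hx δ hδP
      have h2 : 0 ≤ ⟪-(w δ), z⟫ := hz _ hneg
      rw [inner_neg_left] at h2
      have h3 : ⟪w δ, z⟫ = ⟪δ, x⟫ := by
        rw [hzw]
        exact weyl_inner w hw δ x
      have h4 : ⟪δ, x⟫ = 0 := by linarith [h3 ▸ h2]
      have hfix : refl δ x = x := refl_fix (by rw [real_inner_comm]; exact h4)
      have hzw' : z = (w * refl δ) x := by
        rw [hzw]
        show w x = w (refl δ x)
        rw [hfix]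
      have hcount := S.NN_card_dec hδ hneg
      rw [hNN] at hcount
      exact ih _ (by omega) (w * refl δ)
        (Subgroup.mul_mem _ hw (refl_mem_weylGroup (S.P_mem_R hδP))) rfl x z hx hz hzw'

lemma exists_dominant (v : E) : ∃ w ∈ weylGroup S.R, w v ∈ S.C := by
  classical
  have hfin := weylOrbit_finite S.hspan S.hRinv v
  have hne : hfin.toFinset.Nonempty :=
    ⟨v, (Set.Finite.mem_toFinset hfin).mpr (self_mem_weylOrbit v)⟩
  obtain ⟨z, hzF, hmax⟩ := Finset.exists_max_image hfin.toFinset (fun z => ⟪z, S.u⟫) hne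
  have hzO : z ∈ weylOrbit S.R v := (Set.Finite.mem_toFinset hfin).mp hzF
  have hzC : z ∈ S.C := by
    intro α hα
    by_contra hcon
    push_neg at hcon
    have hαR : α ∈ S.R := S.P_mem_R hα
    have hz'O : refl α z ∈ weylOrbit S.R v := weylOrbit_smul hzO (refl_mem_weylGroup hαR)
    have hz'F := (Set.Finite.mem_toFinset hfin).mpr hz'O
    have hle := hmax _ hz'F
    have hA : 0 < ⟪α, α⟫ := inner_self_pos' α (S.hR0 α hαR)
    have hu := S.u_pos hα
    have hrw : ⟪refl α z, S.u⟫ = ⟪z, S.u⟫ - (2 * ⟪z, α⟫ / ⟪α, α⟫) * ⟪α, S.u⟫ := by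
      rw [refl_apply, inner_sub_left, real_inner_smul_left]
    rw [hrw] at hle
    have hc : ⟪z, α⟫ < 0 := by rw [real_inner_comm]; exact hcon
    have hneg : 2 * ⟪z, α⟫ / ⟪α, α⟫ < 0 :=
      div_neg_of_neg_of_pos (by linarith) hA
    nlinarith
  obtain ⟨w, hw, heq⟩ := hzO
  exact ⟨w, hw, heq ▸ hzC⟩

lemma orbit_inner_le {x v z : E} (hx : x ∈ S.C) (hv : v ∈ S.C)
    (hz : z ∈ weylOrbit S.R x) : ⟪z, v⟫ ≤ ⟪x, v⟫ := by
  classical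
  have hfin := weylOrbit_finite S.hspan S.hRinv x
  have hne : hfin.toFinset.Nonempty :=
    ⟨x, (Set.Finite.mem_toFinset hfin).mpr (self_mem_weylOrbit x)⟩
  obtain ⟨m, hmF, hmax1⟩ := Finset.exists_max_image hfin.toFinset (fun z => ⟪z, v⟫) hne
  set T1 := hfin.toFinset.filter (fun z' => ⟪m, v⟫ ≤ ⟪z', v⟫) with hT1_def
  have hmT1 : m ∈ T1 := Finset.mem_filter.mpr ⟨hmF, le_refl _⟩
  obtain ⟨t, htT1, hmax2⟩ := Finset.exists_max_image T1 (fun z => ⟪z, S.u⟫) ⟨m, hmT1⟩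
  obtain ⟨htF, ht1⟩ := Finset.mem_filter.mp htT1
  have htO : t ∈ weylOrbit S.R x := (Set.Finite.mem_toFinset hfin).mp htF
  have ht1' : ⟪t, v⟫ = ⟪m, v⟫ := le_antisymm (hmax1 t htF) ht1
  have htC : t ∈ S.C := by
    intro α hα
    by_contra hcon
    push_neg at hcon
    have hαR : α ∈ S.R := S.P_mem_R hα
    have ht'O : refl α t ∈ weylOrbit S.R x := weylOrbit_smul htO (refl_mem_weylGroup hαR)
    have ht'F := (Set.Finite.mem_toFinset hfin).mpr ht'O
    have hA : 0 < ⟪α, α⟫ := inner_self_pos' α (S.hR0 α hαR)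
    have hu := S.u_pos hα
    have hαv : 0 ≤ ⟪α, v⟫ := hv α hα
    have hc : ⟪t, α⟫ < 0 := by rw [real_inner_comm]; exact hcon
    have hcoef : 2 * ⟪t, α⟫ / ⟪α, α⟫ < 0 :=
      div_neg_of_neg_of_pos (by linarith) hA
    have hrwv : ⟪refl α t, v⟫ = ⟪t, v⟫ - (2 * ⟪t, α⟫ / ⟪α, α⟫) * ⟪α, v⟫ := by
      rw [refl_apply, inner_sub_left, real_inner_smul_left]
    have hαv0 : ⟪α, v⟫ = 0 := by
      have hle := hmax1 _ ht'F
      rw [hrwv, ht1'] at hle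
      nlinarith
    have ht'T1 : refl α t ∈ T1 := by
      apply Finset.mem_filter.mpr
      refine ⟨ht'F, ?_⟩
      rw [hrwv, hαv0, mul_zero, sub_zero, ht1']
    have hle2 := hmax2 _ ht'T1
    have hrwu : ⟪refl α t, S.u⟫ = ⟪t, S.u⟫ - (2 * ⟪t, α⟫ / ⟪α, α⟫) * ⟪α, S.u⟫ := by
      rw [refl_apply, inner_sub_left, real_inner_smul_left]
    rw [hrwu] at hle2
    nlinarith
  -- t is in the chamber and in the orbit of x, hence t = x
  obtain ⟨w, hw, heq⟩ := htO
  have htx : t = x := S.chamber_unique (S.NN w).card w hw rfl x t hx htC heq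
  calc ⟪z, v⟫ ≤ ⟪m, v⟫ := hmax1 z ((Set.Finite.mem_toFinset hfin).mpr hz)
    _ = ⟪t, v⟫ := ht1'.symm
    _ = ⟪x, v⟫ := by rw [htx]

section KG
variable [FiniteDimensional ℝ E]

lemma kostant {x y : E} (hx : x ∈ S.C) (hy : y ∈ S.C) :
    y ∈ closure (convexHull ℝ (weylOrbit S.R x)) ↔ ∀ c ∈ S.C, 0 ≤ ⟪x - y, c⟫ := by
  constructor
  · intro hmem c hc
    have hlin : IsLinearMap ℝ (fun z : E => ⟪z, c⟫) :=
      ⟨fun a b => inner_add_left a b c, fun r a => real_inner_smul_left a c r⟩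
    have hsub : closure (convexHull ℝ (weylOrbit S.R x)) ⊆ {z | ⟪z, c⟫ ≤ ⟪x, c⟫} := by
      apply closure_minimal
      · apply convexHull_min
        · intro z hz
          exact S.orbit_inner_le hx hc hz
        · exact convex_halfSpace_le hlin _
      · exact isClosed_le (by continuity) continuous_const
    have := hsub hmem
    rw [Set.mem_setOf_eq] at this
    rw [inner_sub_left]
    linarith
  · intro hdual
    by_contra hne
    have hconv : Convex ℝ (closure (convexHull ℝ (weylOrbit S.R x))) :=
      (convex_convexHull ℝ _).closure
    obtain ⟨f, r, hfa, hry⟩ := geometric_hahn_banach_closed_point hconv isClosed_closure hne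
    haveI : CompleteSpace E := FiniteDimensional.complete ℝ E
    set v := (InnerProductSpace.toDual ℝ E).symm f with hv_def
    have hvf : ∀ a : E, ⟪v, a⟫ = f a := fun a => InnerProductSpace.toDual_symm_apply
    obtain ⟨w₀, hw₀, hcC⟩ := S.exists_dominant v
    have h1 : ⟪w₀ v, x⟫ = ⟪v, w₀⁻¹ x⟫ := by
      have h := weyl_inner w₀ hw₀ v ((w₀⁻¹ : E ≃ₗ[ℝ] E) x)
      rwa [show w₀ ((w₀⁻¹ : E ≃ₗ[ℝ] E) x) = x from w₀.apply_symm_apply x] at h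
    have h2 : (w₀⁻¹ : E ≃ₗ[ℝ] E) x ∈ weylOrbit S.R x := ⟨w₀⁻¹, inv_mem hw₀, rfl⟩
    have h3 : (w₀⁻¹ : E ≃ₗ[ℝ] E) x ∈ closure (convexHull ℝ (weylOrbit S.R x)) :=
      subset_closure (subset_convexHull ℝ _ h2)
    have h4 : ⟪v, (w₀⁻¹ : E ≃ₗ[ℝ] E) x⟫ < r := by rw [hvf]; exact hfa _ h3
    have h5 : r < ⟪v, y⟫ := by rw [hvf]; exact hry
    have h6 : v ∈ weylOrbit S.R (w₀ v) := ⟨w₀⁻¹, inv_mem hw₀, (w₀.symm_apply_apply v).symm⟩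
    have h7 : ⟪v, y⟫ ≤ ⟪w₀ v, y⟫ := S.orbit_inner_le hcC hy h6
    have h8 := hdual (w₀ v) hcC
    rw [inner_sub_left] at h8
    rw [real_inner_comm x (w₀ v)] at h1
    rw [real_inner_comm y (w₀ v)] at h7
    linarith

end KG

end PosSys

section Perturb
variable {E : Type*} [NormedAddCommGroup E] [InnerProductSpace ℝ E]

lemma exists_eps (s : Finset E) (b : E → ℝ) (hb : ∀ β ∈ s, 0 < b β) :
    ∃ ε : ℝ, 0 < ε ∧ ∀ β ∈ s, ε ≤ b β := by
  classical
  induction s using Finset.induction_on with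
  | empty => exact ⟨1, one_pos, by simp⟩
  | insert _ _ hni ih =>
      rename_i γ s
      obtain ⟨ε, hε, hle⟩ := ih (fun β hβ => hb β (Finset.mem_insert_of_mem hβ))
      refine ⟨min ε (b γ), lt_min hε (hb γ (Finset.mem_insert_self γ s)), ?_⟩
      intro β hβ
      rcases Finset.mem_insert.mp hβ with rfl | hβ
      · exact min_le_right _ _
      · exact le_trans (min_le_left _ _) (hle β hβ)

lemma perturb (A : Finset E) (T : Finset E) (hT : ∀ γ ∈ T, γ ≠ 0) (u0 : E)
    (hA : ∀ α ∈ A, 0 < ⟪α, u0⟫) :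
    ∃ u : E, (∀ α ∈ A, 0 < ⟪α, u⟫) ∧ (∀ γ ∈ T, ⟪γ, u⟫ ≠ 0) := by
  classical
  induction T using Finset.induction_on with
  | empty => exact ⟨u0, hA, by simp⟩
  | insert _ _ hni ih =>
      rename_i γ T'
      obtain ⟨u, hu1, hu2⟩ := ih (fun γ' hγ' => hT γ' (Finset.mem_insert_of_mem hγ'))
      have hγ0 : γ ≠ 0 := hT γ (Finset.mem_insert_self γ T')
      rcases eq_or_ne (⟪γ, u⟫ : ℝ) 0 with hz | hnz
      · -- perturb in the direction γ
        obtain ⟨ε, hε, hεle⟩ := exists_eps (A ∪ T')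
            (fun β => |⟪β, u⟫| / (|⟪β, γ⟫| + 1)) (fun β hβ => by
              rcases Finset.mem_union.mp hβ with h | h
              · have := hu1 β h
                have h2 : 0 < |⟪β, u⟫| := by rw [abs_pos]; linarith
                positivity
              · have := hu2 β h
                have h2 : 0 < |⟪β, u⟫| := abs_pos.mpr this
                positivity)
        refine ⟨u + ε • γ, ?_, ?_⟩
        · intro α hα
          rw [inner_add_right, real_inner_smul_right]
          have hb := hεle α (Finset.mem_union_left _ hα)
          have h3 : (0:ℝ) < |⟪α, γ⟫| + 1 := by positivity
          rw [le_div_iff₀ h3] at hb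
          have h4 := abs_of_pos (hu1 α hα)
          have h5 := neg_abs_le (⟪α, γ⟫ : ℝ)
          nlinarith
        · intro γ' hγ'
          rcases Finset.mem_insert.mp hγ' with rfl | h
          · rw [inner_add_right, real_inner_smul_right, hz, zero_add]
            exact ne_of_gt (mul_pos hε (inner_self_pos' γ' hγ0))
          · have hb := hεle γ' (Finset.mem_union_right _ h)
            have h3 : (0:ℝ) < |⟪γ', γ⟫| + 1 := by positivity
            rw [le_div_iff₀ h3] at hb
            rw [inner_add_right, real_inner_smul_right]
            intro heq0
            have h6 : ⟪γ', u⟫ = -(ε * ⟪γ', γ⟫) := by linarith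
            have habs : |⟪γ', u⟫| = ε * |⟪γ', γ⟫| := by
              rw [h6, abs_neg, abs_mul, abs_of_pos hε]
            nlinarith
      · exact ⟨u, hu1, fun γ' hγ' => by
          rcases Finset.mem_insert.mp hγ' with rfl | h
          · exact hnz
          · exact hu2 γ' h⟩

end Perturb

end Kostant


open Kostant Kostant.PosSys in
/-- Kostant's convexity characterization: for `x, y` in the closed Weyl chamber `C` of a
finite reflection group, `y` belongs to the closed convex hull of the orbit of `x`
if and only if `x − y` lies in the dual cone `C*` of `C`. -/
theorem mem_closedConvexHull_orbit_iff_sub_mem_dualCone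
    {E : Type*} [NormedAddCommGroup E] [InnerProductSpace ℝ E] [FiniteDimensional ℝ E]
    (R : Finset E)
    (hR0 : ∀ α ∈ R, α ≠ 0)
    (hspan : Submodule.span ℝ (R : Set E) = ⊤)
    (hreduced : ∀ α ∈ R, ∀ r : ℝ, r • α ∈ (R : Set E) → r = 1 ∨ r = -1)
    (hRinv : ∀ α ∈ R, ∀ β ∈ R, β - (2 * ⟪β, α⟫ / ⟪α, α⟫) • α ∈ R)
    (Rplus : Finset E)
    (hpos : (R : Set E) = (Rplus : Set E) ∪ (-(Rplus : Set E)))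
    (hdisj : Disjoint (Rplus : Set E) (-(Rplus : Set E)))
    (x y : E)
    (hx : x ∈ {v : E | ∀ α ∈ Rplus, 0 ≤ ⟪α, v⟫})
    (hy : y ∈ {v : E | ∀ α ∈ Rplus, 0 ≤ ⟪α, v⟫}) :
    y ∈ closure (convexHull ℝ (weylOrbit R x)) ↔
      x - y ∈ {u : E | ∀ v ∈ {v : E | ∀ α ∈ Rplus, 0 ≤ ⟪α, v⟫}, 0 ≤ ⟪u, v⟫} := by
  classical
  set CS : Set E := {v : E | ∀ α ∈ Rplus, 0 ≤ ⟪α, v⟫} with hCS_def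
  have hRplusR : ∀ α ∈ Rplus, α ∈ R := by
    intro α h
    have : α ∈ (R : Set E) := by
      rw [hpos]
      exact Set.mem_union_left _ (Finset.mem_coe.mpr h)
    exact Finset.mem_coe.mp this
  have hcases : ∀ α ∈ R, α ∈ Rplus ∨ -α ∈ Rplus := by
    intro α h
    have : α ∈ (R : Set E) := Finset.mem_coe.mpr h
    rw [hpos] at this
    rcases this with h' | h'
    · exact Or.inl (Finset.mem_coe.mp h')
    · exact Or.inr (Finset.mem_coe.mp (Set.mem_neg.mp h'))
  have hsymmR : ∀ α ∈ R, -α ∈ R := by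
    intro α h
    rcases hcases α h with h' | h'
    · apply Finset.mem_coe.mp
      rw [hpos]
      apply Set.mem_union_right
      rw [Set.mem_neg, neg_neg]
      exact Finset.mem_coe.mpr h'
    · exact hRplusR _ h'
  set S0 : Finset E := Rplus.filter (fun α => ∀ v ∈ CS, ⟪α, v⟫ = 0) with hS0_def
  set S1 : Finset E := Rplus.filter (fun α => ¬ ∀ v ∈ CS, ⟪α, v⟫ = 0) with hS1_def
  have hS1ex : ∀ α ∈ S1, ∃ v, v ∈ CS ∧ 0 < ⟪α, v⟫ := by
    intro α hα
    rw [hS1_def, Finset.mem_filter] at hα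
    obtain ⟨hαp, hnall⟩ := hα
    push_neg at hnall
    obtain ⟨v, hvCS, hvne⟩ := hnall
    exact ⟨v, hvCS, lt_of_le_of_ne (hvCS α hαp) (Ne.symm hvne)⟩
  choose! f hf1 hf2 using hS1ex
  set u1 : E := ∑ α ∈ S1, f α with hu1_def
  have hu1CS : u1 ∈ CS := by
    intro β hβ
    rw [hu1_def, inner_sum]
    exact Finset.sum_nonneg (fun α hα => (hf1 α hα) β hβ)
  have hu1S1 : ∀ α ∈ S1, 0 < ⟪α, u1⟫ := by
    intro α hα
    rw [hu1_def, inner_sum]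
    apply Finset.sum_pos' (fun β hβ => (hf1 β hβ) α (Finset.mem_of_mem_filter α hα))
    exact ⟨α, hα, hf2 α hα⟩
  have hu1S0 : ∀ γ ∈ S0, ⟪γ, u1⟫ = 0 := by
    intro γ hγ
    rw [hS0_def, Finset.mem_filter] at hγ
    exact hγ.2 u1 hu1CS
  obtain ⟨u, huS1, huR⟩ := Kostant.perturb S1 R hR0 u1 hu1S1
  set Sg : Kostant.PosSys E := ⟨R, u, hR0, hspan, hreduced, hRinv, hsymmR, huR⟩ with hSg_def
  have hS1P : ∀ α ∈ S1, α ∈ Sg.P := by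
    intro α hα
    exact Sg.mem_P.mpr ⟨hRplusR α (Finset.mem_of_mem_filter α hα), huS1 α hα⟩
  have hS0S1 : ∀ α ∈ Rplus, α ∈ S0 ∨ α ∈ S1 := by
    intro α hα
    by_cases h : ∀ v ∈ CS, ⟪α, v⟫ = 0
    · exact Or.inl (Finset.mem_filter.mpr ⟨hα, h⟩)
    · exact Or.inr (Finset.mem_filter.mpr ⟨hα, h⟩)
  have hCSsub : CS ⊆ Sg.C := by
    intro v hv β hβ
    obtain ⟨hβR, hβu⟩ := Sg.mem_P.mp hβ
    rcases hcases β hβR with h' | h'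
    · exact hv β h'
    · rcases hS0S1 _ h' with h0 | h1
      · have : ⟪-β, v⟫ = 0 := (Finset.mem_filter.mp h0).2 v hv
        rw [inner_neg_left] at this
        linarith
      · have := huS1 _ h1
        rw [inner_neg_left] at this
        have hβu' : (0:ℝ) < ⟪β, Sg.u⟫ := hβu
        have hgu : Sg.u = u := rfl
        rw [hgu] at hβu'
        linarith
  have hx' : x ∈ Sg.C := hCSsub hx
  have hy' : y ∈ Sg.C := hCSsub hy
  -- the subgroup generated by the degenerate reflections
  set W' : Subgroup (E ≃ₗ[ℝ] E) :=
    Subgroup.closure {g : E ≃ₗ[ℝ] E | ∃ γ ∈ S0, g = Kostant.refl γ} with hW'_def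
  have hW'le : W' ≤ weylGroup R := by
    apply (Subgroup.closure_le _).mpr
    rintro g ⟨γ, hγ, rfl⟩
    exact Kostant.refl_mem_weylGroup (hRplusR γ (Finset.mem_of_mem_filter γ hγ))
  have hWfin : Finite (weylGroup R) := Kostant.weylGroup_finite hspan hRinv
  have hW'fin : Finite W' :=
    Finite.of_injective (Subgroup.inclusion hW'le) (Subgroup.inclusion_injective hW'le)
  have : Fintype ↥W' := Fintype.ofFinite _
  set n : ℕ := Fintype.card ↥W' with hn_def
  have hnpos : 0 < n := Fintype.card_pos
  set π : E → E := fun z => (n:ℝ)⁻¹ • ∑ w : ↥W', w.1 z with hπ_def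
  have hfixCS : ∀ w ∈ W', ∀ v ∈ CS ∪ {u1}, w v = v := by
    intro w hw
    induction hw using Subgroup.closure_induction with
    | mem g hg =>
        obtain ⟨γ, hγ, rfl⟩ := hg
        intro v hv
        apply Kostant.refl_fix
        rw [real_inner_comm]
        rcases hv with hv | hv
        · exact (Finset.mem_filter.mp hγ).2 v hv
        · rw [Set.mem_singleton_iff] at hv
          rw [hv]
          exact hu1S0 γ hγ
    | one => intro v _; rfl
    | mul w₁ w₂ h1 h2 ih1 ih2 =>
        intro v hv
        show w₁ (w₂ v) = v
        rw [ih2 v hv, ih1 v hv]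
    | inv w h ih =>
        intro v hv
        have h2 := ih v hv
        calc (w⁻¹ : E ≃ₗ[ℝ] E) v = (w⁻¹ : E ≃ₗ[ℝ] E) (w v) := by rw [h2]
          _ = v := w.symm_apply_apply v
  have hπfix : ∀ z, (∀ w : ↥W', w.1 z = z) → π z = z := by
    intro z hz
    rw [hπ_def]
    simp only
    rw [Finset.sum_congr rfl (fun w _ => hz w), Finset.sum_const, Finset.card_univ]
    rw [← hn_def, ← Nat.cast_smul_eq_nsmul ℝ, smul_smul,
      inv_mul_cancel₀ (by positivity : (n:ℝ) ≠ 0), one_smul]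
  have hπCS : ∀ v ∈ CS, π v = v := fun v hv =>
    hπfix v (fun w => hfixCS w.1 w.2 v (Or.inl hv))
  have hWz : ∀ (w : ↥W') (z : E), w.1 (π z) = π z := by
    intro w z
    rw [hπ_def]
    simp only
    rw [map_smul, map_sum]
    congr 1
    apply Fintype.sum_bijective (fun w' : ↥W' => w * w')
      (Group.mulLeft_bijective w)
    intro w'
    rfl
  have hWinner : ∀ (w : ↥W') (a b : E), ⟪w.1 a, w.1 b⟫ = ⟪a, b⟫ :=
    fun w a b => Kostant.weyl_inner w.1 (hW'le w.2) a b
  have hselfadj : ∀ a b : E, ⟪π a, b⟫ = ⟪a, π b⟫ := by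
    intro a b
    rw [hπ_def]
    simp only
    rw [real_inner_smul_left, real_inner_smul_right, sum_inner, inner_sum]
    congr 1
    have hterm : ∀ w : ↥W', ⟪w.1 a, b⟫ = ⟪a, (w⁻¹).1 b⟫ := by
      intro w
      have := hWinner w a ((w⁻¹).1 b)
      rwa [show w.1 ((w⁻¹).1 b) = b from (w.1).apply_symm_apply b] at this
    rw [Finset.sum_congr rfl (fun w _ => hterm w)]
    apply Fintype.sum_bijective (fun w : ↥W' => w⁻¹) (Equiv.inv (↥W')).bijective
    intro w
    rfl
  have hroot_u1 : ∀ γ ∈ R, 0 < ⟪γ, u1⟫ → γ ∈ S1 := by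
    intro γ hγ hpos'
    rcases hcases γ hγ with h' | h'
    · rcases hS0S1 _ h' with h0 | h1
      · rw [hu1S0 γ h0] at hpos'
        exact absurd hpos' (lt_irrefl 0)
      · exact h1
    · rcases hS0S1 _ h' with h0 | h1
      · have := hu1S0 _ h0
        rw [inner_neg_left] at this
        linarith
      · have := hu1S1 _ h1
        rw [inner_neg_left] at this
        linarith
  have hπS1 : ∀ α ∈ S1, ∀ c ∈ Sg.C, 0 ≤ ⟪π α, c⟫ := by
    intro α hα c hc
    rw [hπ_def]
    simp only
    rw [real_inner_smul_left, sum_inner]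
    apply mul_nonneg (by positivity)
    apply Finset.sum_nonneg
    intro w _
    have hαR : α ∈ R := hRplusR α (Finset.mem_of_mem_filter α hα)
    have hwαR : w.1 α ∈ R := Kostant.weyl_root hRinv w.1 (hW'le w.2) α hαR
    have hwu1 : ⟪w.1 α, u1⟫ = ⟪α, u1⟫ := by
      have h1 := hWinner w α ((w⁻¹).1 u1)
      rw [show w.1 ((w⁻¹).1 u1) = u1 from (w.1).apply_symm_apply u1] at h1
      rw [show (w⁻¹).1 u1 = u1 from hfixCS (w⁻¹).1 (w⁻¹).2 u1 (Or.inr rfl)] at h1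
      exact h1
    have hwS1 : w.1 α ∈ S1 := hroot_u1 _ hwαR (by rw [hwu1]; exact hu1S1 α hα)
    exact hc _ (hS1P _ hwS1)
  have hπzero : ∀ z γ', γ' ∈ S0 → ⟪π z, γ'⟫ = 0 := by
    intro z γ' hγ'
    have hγ'0 : γ' ≠ 0 := hR0 γ' (hRplusR γ' (Finset.mem_of_mem_filter γ' hγ'))
    have hmemW' : Kostant.refl γ' ∈ W' := Subgroup.subset_closure ⟨γ', hγ', rfl⟩
    have hfix := hWz ⟨Kostant.refl γ', hmemW'⟩ z
    have : Kostant.refl γ' (π z) = π z := hfix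
    rw [Kostant.refl_apply] at this
    have h2 : (2 * ⟪π z, γ'⟫ / ⟪γ', γ'⟫) • γ' = 0 := by
      have := sub_eq_self.mp this
      exact this
    rcases smul_eq_zero.mp h2 with h3 | h3
    · have hA := Kostant.inner_self_ne γ' hγ'0
      field_simp at h3
      linarith
    · exact absurd h3 hγ'0
  have hπS0 : ∀ γ ∈ S0, π γ = 0 := by
    intro γ hγ
    have h1 : π (π γ) = π γ := hπfix (π γ) (fun w => hWz w γ)
    have h2 : ⟪π γ, π γ⟫ = 0 := by
      rw [hselfadj γ (π γ), h1, real_inner_comm]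
      exact hπzero γ γ hγ
    exact inner_self_eq_zero.mp h2
  have hπsub : π (x - y) = π x - π y := by
    rw [hπ_def]
    simp only
    rw [← smul_sub, ← Finset.sum_sub_distrib]
    congr 1
    apply Finset.sum_congr rfl
    intro w _
    exact map_sub _ x y
  -- final equivalence
  simp only [Set.mem_setOf_eq]
  constructor
  · intro hmem v hv
    exact (Sg.kostant hx' hy').mp hmem v (hCSsub hv)
  · intro hdual
    apply (Sg.kostant hx' hy').mpr
    intro c hc
    have hπc : π c ∈ CS := by
      intro α hα
      rcases hS0S1 α hα with h0 | h1
      · rw [← hselfadj α c, hπS0 α h0, inner_zero_left]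
      · rw [← hselfadj α c]
        exact hπS1 α h1 c hc
    have h1 : π (x - y) = x - y := by
      rw [hπsub, hπCS x hx, hπCS y hy]
    calc (0:ℝ) ≤ ⟪x - y, π c⟫ := hdual (π c) hπc
      _ = ⟪π (x - y), c⟫ := (hselfadj (x - y) c).symm
      _ = ⟪x - y, c⟫ := by rw [h1]
end
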